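/- arXiv:2510.18365 — 2 statements merged into one kernel-verified Lean document; each statement's English description precedes it below -/
import Mathlib

section
/- There exists a universal constant C > 0 such that the following holds. Let ν > 0, k ∈ ℝ with k ≠ 0, and let f : [0,∞) × [−1,1] → ℂ be continuous, with continuous derivatives ∂_t f, ∂_y f, ∂²_y f and ∂_t ∂_y f, satisfying ∂_t f(t,y) = ν(∂²_y f(t,y) − k² f(t,y)) − i k y f(t,y) for all t ≥ 0 and y ∈ (−1,1), and f(t,−1) = f(t,1) = 0 for all t ≥ 0. Then for every t ≥ 0, ‖f(t,·)‖_{L²(−1,1)} ≤ C (1 + νt + ν k² t³)^{−1/2} ‖f(0,·)‖_{L²(−1,1)}. -/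
open Set MeasureTheory intervalIntegral Metric Complex
open scoped Interval

noncomputable section

namespace EDP


/-- derivative of squared norm of a complex-valued function of a real variable -/
lemma hasDerivAt_normSq {z : ℝ → ℂ} {z' : ℂ} {x : ℝ} (h : HasDerivAt z z' x) :
    HasDerivAt (fun s => ‖z s‖ ^ 2) (2 * (z' * (starRingEnd ℂ) (z x)).re) x := by
  have h2 : HasDerivAt (fun s => z s * (starRingEnd ℂ) (z s))
      (z' * (starRingEnd ℂ) (z x) + z x * (starRingEnd ℂ) z') x := h.mul h.star
  have h3 := (Complex.reCLM.hasFDerivAt.comp_hasDerivAt x h2)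
  have e1 : (⇑Complex.reCLM ∘ fun s => z s * (starRingEnd ℂ) (z s)) = fun s => ‖z s‖ ^ 2 := by
    funext s
    simp only [Function.comp_apply, Complex.reCLM_apply, Complex.mul_conj,
      Complex.ofReal_re]
    rw [Complex.normSq_eq_norm_sq]
  have e2 : Complex.reCLM (z' * (starRingEnd ℂ) (z x) + z x * (starRingEnd ℂ) z')
      = 2 * (z' * (starRingEnd ℂ) (z x)).re := by
    simp only [Complex.reCLM_apply, Complex.add_re, Complex.mul_re,
      Complex.conj_re, Complex.conj_im]
    ring
  rw [e1] at h3
  rw [e2] at h3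
  exact h3

/-- integration by parts on [-1,1] with conjugate -/
lemma ibp (p q p' q' : ℝ → ℂ)
    (hp : ContinuousOn p (Icc (-1) 1)) (hq : ContinuousOn q (Icc (-1) 1))
    (hp' : ContinuousOn p' (Icc (-1) 1)) (hq' : ContinuousOn q' (Icc (-1) 1))
    (hdp : ∀ y ∈ Ioo (-1:ℝ) 1, HasDerivWithinAt p (p' y) (Ioi y) y)
    (hdq : ∀ y ∈ Ioo (-1:ℝ) 1, HasDerivWithinAt q (q' y) (Ioi y) y) :
    ∫ y in (-1:ℝ)..1, (p' y * (starRingEnd ℂ) (q y) + p y * (starRingEnd ℂ) (q' y))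
      = p 1 * (starRingEnd ℂ) (q 1) - p (-1) * (starRingEnd ℂ) (q (-1)) := by
  have hcq : ContinuousOn (fun y => (starRingEnd ℂ) (q y)) (Icc (-1) 1) :=
    Complex.continuous_conj.comp_continuousOn hq
  have hcq' : ContinuousOn (fun y => (starRingEnd ℂ) (q' y)) (Icc (-1) 1) :=
    Complex.continuous_conj.comp_continuousOn hq'
  have hcont : ContinuousOn (fun y => p y * (starRingEnd ℂ) (q y)) (Icc (-1) 1) := hp.mul hcq
  have hderiv : ∀ y ∈ Ioo (-1:ℝ) 1, HasDerivWithinAt (fun y => p y * (starRingEnd ℂ) (q y))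
      (p' y * (starRingEnd ℂ) (q y) + p y * (starRingEnd ℂ) (q' y)) (Ioi y) y := by
    intro y hy
    exact (hdp y hy).mul ((hdq y hy).star)
  have hint : IntervalIntegrable
      (fun y => p' y * (starRingEnd ℂ) (q y) + p y * (starRingEnd ℂ) (q' y)) volume (-1) 1 := by
    apply ContinuousOn.intervalIntegrable
    rw [uIcc_of_le (by norm_num : (-1:ℝ) ≤ 1)]
    exact (hp'.mul hcq).add (hp.mul hcq')
  have := integral_eq_sub_of_hasDeriv_right_of_le (by norm_num : (-1:ℝ) ≤ 1) hcont hderiv hint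
  rw [this]



structure ED where
  ν : ℝ
  k : ℝ
  f : ℝ → ℝ → ℂ
  ft : ℝ → ℝ → ℂ
  fy : ℝ → ℝ → ℂ
  fyy : ℝ → ℝ → ℂ
  fty : ℝ → ℝ → ℂ
  hν : 0 < ν
  hk : k ≠ 0
  cf : ContinuousOn (fun p : ℝ × ℝ => f p.1 p.2) (Ici 0 ×ˢ Icc (-1) 1)
  cft : ContinuousOn (fun p : ℝ × ℝ => ft p.1 p.2) (Ici 0 ×ˢ Icc (-1) 1)
  cfy : ContinuousOn (fun p : ℝ × ℝ => fy p.1 p.2) (Ici 0 ×ˢ Icc (-1) 1)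
  cfyy : ContinuousOn (fun p : ℝ × ℝ => fyy p.1 p.2) (Ici 0 ×ˢ Icc (-1) 1)
  cfty : ContinuousOn (fun p : ℝ × ℝ => fty p.1 p.2) (Ici 0 ×ˢ Icc (-1) 1)
  dft : ∀ t ∈ Ici (0:ℝ), ∀ y ∈ Icc (-1:ℝ) 1, HasDerivAt (fun s => f s y) (ft t y) t
  dfy : ∀ t ∈ Ici (0:ℝ), ∀ y ∈ Icc (-1:ℝ) 1, HasDerivAt (fun z => f t z) (fy t y) y
  dfyy : ∀ t ∈ Ici (0:ℝ), ∀ y ∈ Icc (-1:ℝ) 1, HasDerivAt (fun z => fy t z) (fyy t y) y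
  dfty : ∀ t ∈ Ici (0:ℝ), ∀ y ∈ Icc (-1:ℝ) 1, HasDerivAt (fun s => fy s y) (fty t y) t
  pde : ∀ t ∈ Ici (0:ℝ), ∀ y ∈ Ioo (-1:ℝ) 1,
    ft t y = (ν:ℂ) * (fyy t y - (k:ℂ)^2 * f t y) - Complex.I * (k:ℂ) * (y:ℂ) * f t y
  bc : ∀ t ∈ Ici (0:ℝ), f t (-1) = 0 ∧ f t 1 = 0

/-- continuity of a time-slice -/
lemma sliceT {w : ℝ → ℝ → ℂ}
    (hw : ContinuousOn (fun p : ℝ × ℝ => w p.1 p.2) (Ici 0 ×ˢ Icc (-1) 1))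
    {y : ℝ} (hy : y ∈ Icc (-1:ℝ) 1) : ContinuousOn (fun t => w t y) (Ici 0) :=
  hw.comp ((continuous_id.prodMk continuous_const).continuousOn) (fun _ ht => ⟨ht, hy⟩)

/-- continuity of a space-slice -/
lemma sliceY {w : ℝ → ℝ → ℂ}
    (hw : ContinuousOn (fun p : ℝ × ℝ => w p.1 p.2) (Ici 0 ×ˢ Icc (-1) 1))
    {t : ℝ} (ht : t ∈ Ici (0:ℝ)) : ContinuousOn (fun y => w t y) (Icc (-1) 1) :=
  hw.comp ((continuous_const.prodMk continuous_id).continuousOn) (fun _ hy => ⟨ht, hy⟩)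

/-- uniform bound on a compact time-strip -/
lemma bdd {w : ℝ → ℝ → ℂ}
    (hw : ContinuousOn (fun p : ℝ × ℝ => w p.1 p.2) (Ici 0 ×ˢ Icc (-1) 1))
    {a b : ℝ} (ha : 0 ≤ a) :
    ∃ M : ℝ, 0 ≤ M ∧ ∀ t ∈ Icc a b, ∀ y ∈ Icc (-1:ℝ) 1, ‖w t y‖ ≤ M := by
  have hsub : (Icc a b ×ˢ Icc (-1:ℝ) 1) ⊆ (Ici 0 ×ˢ Icc (-1) 1) := by
    intro p hp
    exact ⟨le_trans ha hp.1.1, hp.2⟩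
  obtain ⟨M, hM⟩ := (isCompact_Icc.prod isCompact_Icc).exists_bound_of_continuousOn
    (hw.mono hsub)
  exact ⟨max M 0, le_max_right _ _, fun t ht y hy =>
    le_trans (hM (t, y) ⟨ht, hy⟩) (le_max_left _ _)⟩

section W

variable {w wt : ℝ → ℝ → ℂ}
  (hw : ContinuousOn (fun p : ℝ × ℝ => w p.1 p.2) (Ici 0 ×ˢ Icc (-1) 1))
  (hwt : ContinuousOn (fun p : ℝ × ℝ => wt p.1 p.2) (Ici 0 ×ˢ Icc (-1) 1))
  (hd : ∀ t ∈ Ioi (0:ℝ), ∀ y ∈ Icc (-1:ℝ) 1, HasDerivAt (fun s => w s y) (wt t y) t)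

include hw in
lemma integrable_sq {t : ℝ} (ht : 0 ≤ t) :
    IntervalIntegrable (fun y => ‖w t y‖^2) volume (-1) 1 := by
  apply ContinuousOn.intervalIntegrable
  rw [uIcc_of_le (by norm_num : (-1:ℝ) ≤ 1)]
  exact ((sliceY hw ht).norm).pow 2

include hw hwt hd in
lemma hasDerivAt_W {t : ℝ} (ht : 0 < t) :
    HasDerivAt (fun s => ∫ y in (-1:ℝ)..1, ‖w s y‖^2)
      (∫ y in (-1:ℝ)..1, 2 * (wt t y * (starRingEnd ℂ) (w t y)).re) t := by
  obtain ⟨M1, hM1nn, hM1⟩ := bdd hw (le_of_lt (half_pos ht)) (b := t + t/2)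
  obtain ⟨M2, hM2nn, hM2⟩ := bdd hwt (le_of_lt (half_pos ht)) (b := t + t/2)
  have hball : ∀ x ∈ ball t (t/2), x ∈ Icc (t/2) (t + t/2) ∧ 0 < x := by
    intro x hx
    rw [mem_ball, Real.dist_eq, abs_lt] at hx
    constructor
    · constructor <;> linarith [hx.1, hx.2]
    · linarith [hx.1]
  have hmain := hasDerivAt_integral_of_dominated_loc_of_deriv_le
    (F := fun s y => ‖w s y‖^2)
    (F' := fun s y => 2 * (wt s y * (starRingEnd ℂ) (w s y)).re)
    (a := (-1:ℝ)) (b := 1) (x₀ := t) (μ := volume) (bound := fun _ => 2 * M2 * M1)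
    (ball_mem_nhds t (half_pos ht)) ?_ ?_ ?_ ?_ ?_ ?_
  · exact hmain.2
  · filter_upwards [IsOpen.mem_nhds isOpen_Ioi ht] with x hx
    apply ContinuousOn.aestronglyMeasurable _ measurableSet_uIoc
    have : Ι (-1:ℝ) 1 ⊆ Icc (-1) 1 := by
      rw [uIoc_of_le (by norm_num : (-1:ℝ) ≤ 1)]
      exact Ioc_subset_Icc_self
    exact (((sliceY hw (mem_Ici.mpr (le_of_lt (mem_Ioi.mp hx)))).norm).pow 2).mono this
  · exact integrable_sq hw (le_of_lt ht)
  · apply ContinuousOn.aestronglyMeasurable _ measurableSet_uIoc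
    have hsub : Ι (-1:ℝ) 1 ⊆ Icc (-1) 1 := by
      rw [uIoc_of_le (by norm_num : (-1:ℝ) ≤ 1)]
      exact Ioc_subset_Icc_self
    have : ContinuousOn (fun y => 2 * (wt t y * (starRingEnd ℂ) (w t y)).re) (Icc (-1) 1) := by
      apply ContinuousOn.mul continuousOn_const
      exact Complex.continuous_re.comp_continuousOn
        ((sliceY hwt (le_of_lt ht)).mul
          (Complex.continuous_conj.comp_continuousOn (sliceY hw (le_of_lt ht))))
    exact this.mono hsub
  · apply Filter.Eventually.of_forall
    intro y hy x hx
    have hyIcc : y ∈ Icc (-1:ℝ) 1 := by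
      rw [uIoc_of_le (by norm_num : (-1:ℝ) ≤ 1)] at hy
      exact Ioc_subset_Icc_self hy
    obtain ⟨hxm, _⟩ := hball x hx
    have h1 : ‖wt x y * (starRingEnd ℂ) (w x y)‖ ≤ M2 * M1 := by
      rw [norm_mul, RCLike.norm_conj]
      exact mul_le_mul (hM2 x hxm y hyIcc) (hM1 x hxm y hyIcc) (norm_nonneg _) hM2nn
    calc ‖2 * (wt x y * (starRingEnd ℂ) (w x y)).re‖
        = 2 * |(wt x y * (starRingEnd ℂ) (w x y)).re| := by
          rw [norm_mul]; norm_num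
      _ ≤ 2 * ‖wt x y * (starRingEnd ℂ) (w x y)‖ := by
          have := Complex.abs_re_le_norm (wt x y * (starRingEnd ℂ) (w x y))
          linarith
      _ ≤ 2 * (M2 * M1) := by linarith
      _ = 2 * M2 * M1 := by ring
  · exact intervalIntegrable_const
  · apply Filter.Eventually.of_forall
    intro y hy x hx
    have hyIcc : y ∈ Icc (-1:ℝ) 1 := by
      rw [uIoc_of_le (by norm_num : (-1:ℝ) ≤ 1)] at hy
      exact Ioc_subset_Icc_self hy
    exact hasDerivAt_normSq (hd x (hball x hx).2 y hyIcc)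


include hw in
lemma continuousOn_W :
    ContinuousOn (fun s => ∫ y in (-1:ℝ)..1, ‖w s y‖^2) (Ici 0) := by
  intro t₀ ht₀
  obtain ⟨M, hMnn, hM⟩ := bdd hw (le_refl (0:ℝ)) (b := t₀ + 1)
  have hev : ∀ᶠ x in nhdsWithin t₀ (Ici 0), x ∈ Icc (0:ℝ) (t₀ + 1) := by
    have h1 : ∀ᶠ x in nhdsWithin t₀ (Ici 0), x ∈ Ici (0:ℝ) :=
      eventually_mem_nhdsWithin
    have h2 : ∀ᶠ x in nhdsWithin t₀ (Ici 0), x < t₀ + 1 :=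
      Filter.Eventually.filter_mono nhdsWithin_le_nhds
        (Filter.Tendsto.eventually_lt_const (by linarith) Filter.tendsto_id)
    filter_upwards [h1, h2] with x hx1 hx2
    exact ⟨hx1, le_of_lt hx2⟩
  have hsub : Ι (-1:ℝ) 1 ⊆ Icc (-1) 1 := by
    rw [uIoc_of_le (by norm_num : (-1:ℝ) ≤ 1)]
    exact Ioc_subset_Icc_self
  apply continuousWithinAt_of_dominated_interval (bound := fun _ => M^2)
  · filter_upwards [hev] with x hx
    exact (ContinuousOn.aestronglyMeasurable
      ((((sliceY hw hx.1).norm).pow 2).mono hsub) measurableSet_uIoc)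
  · filter_upwards [hev] with x hx
    apply Filter.Eventually.of_forall
    intro y hy
    have hyIcc := hsub hy
    have : ‖w x y‖ ≤ M := hM x hx y hyIcc
    have h0 : (0:ℝ) ≤ ‖w x y‖ := norm_nonneg _
    rw [Real.norm_eq_abs, _root_.abs_of_nonneg (by positivity : (0:ℝ) ≤ ‖w x y‖^2)]
    nlinarith
  · exact intervalIntegrable_const
  · apply Filter.Eventually.of_forall
    intro y hy
    have hyIcc := hsub hy
    exact (((sliceT hw hyIcc) t₀ ht₀).norm).pow 2

end W

namespace ED

variable (S : ED)

/-- boundary values of `f` vanish -/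
lemma f_bdry {t : ℝ} (ht : 0 ≤ t) {x : ℝ} (hx : x = -1 ∨ x = 1) : S.f t x = 0 := by
  rcases hx with h | h <;> rw [h]
  · exact (S.bc t ht).1
  · exact (S.bc t ht).2

/-- boundary values of `ft` vanish for positive times -/
lemma ft_bdry {t : ℝ} (ht : 0 < t) {x : ℝ} (hx : x = -1 ∨ x = 1) : S.ft t x = 0 := by
  have hxIcc : x ∈ Icc (-1:ℝ) 1 := by rcases hx with h | h <;> rw [h] <;> norm_num
  have h := S.dft t (le_of_lt ht) x hxIcc
  have hev : (fun s => S.f s x) =ᶠ[nhds t] fun _ => (0:ℂ) := by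
    filter_upwards [IsOpen.mem_nhds isOpen_Ioi ht] with s hs
    exact S.f_bdry (le_of_lt (mem_Ioi.mp hs)) hx
  have h' : HasDerivAt (fun _ : ℝ => (0:ℂ)) (S.ft t x) t := h.congr_of_eventuallyEq hev.symm
  exact ((hasDerivAt_const t (0:ℂ)).unique h').symm

/-- FTC in space for `f` -/
lemma f_eq_integral {t : ℝ} (ht : 0 ≤ t) {x : ℝ} (hx : x ∈ Icc (-1:ℝ) 1) :
    S.f t x - S.f t (-1) = ∫ z in (-1:ℝ)..x, S.fy t z := by
  have hsub : uIcc (-1:ℝ) x ⊆ Icc (-1) 1 := by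
    rw [uIcc_of_le hx.1]
    exact Icc_subset_Icc (le_refl _) hx.2
  rw [integral_eq_sub_of_hasDerivAt (fun z hz => S.dfy t ht z (hsub hz))
    (((sliceY S.cfy ht).mono hsub).intervalIntegrable)]

/-- Clairaut: `fty` is the spatial derivative of `ft` (interior). -/
lemma hasDerivAt_ft_y {t : ℝ} (ht : 0 < t) {y : ℝ} (hy : y ∈ Ioo (-1:ℝ) 1) :
    HasDerivAt (fun z => S.ft t z) (S.fty t y) y := by
  -- Step A : ft t x - ft t (-1) = ∫_{-1}^x fty t z   for x ∈ Icc
  have stepA : ∀ x ∈ Icc (-1:ℝ) 1,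
      S.ft t x - S.ft t (-1) = ∫ z in (-1:ℝ)..x, S.fty t z := by
    intro x hxIcc
    have hsub : Ι (-1:ℝ) x ⊆ Icc (-1:ℝ) 1 := by
      rw [uIoc_of_le hxIcc.1]
      exact Ioc_subset_Icc_self.trans (Icc_subset_Icc (le_refl _) hxIcc.2)
    obtain ⟨M, hMnn, hM⟩ := bdd S.cfty (le_of_lt (half_pos ht)) (b := t + t/2)
    have hball : ∀ s ∈ ball t (t/2), s ∈ Icc (t/2) (t + t/2) ∧ 0 < s := by
      intro s hs
      rw [mem_ball, Real.dist_eq, abs_lt] at hs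
      exact ⟨⟨by linarith [hs.1], by linarith [hs.2]⟩, by linarith [hs.1]⟩
    have hDI := hasDerivAt_integral_of_dominated_loc_of_deriv_le
      (F := fun s z => S.fy s z) (F' := fun s z => S.fty s z)
      (a := (-1:ℝ)) (b := x) (x₀ := t) (μ := volume) (bound := fun _ => M)
      (ball_mem_nhds t (half_pos ht)) ?_ ?_ ?_ ?_ ?_ ?_
    · -- combine with derivative of s ↦ f s x - f s (-1)
      have hfd : HasDerivAt (fun s => S.f s x - S.f s (-1))
          (S.ft t x - S.ft t (-1)) t :=
        (S.dft t (le_of_lt ht) x hxIcc).sub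
          (S.dft t (le_of_lt ht) (-1) (by norm_num))
      have hev : (fun s => S.f s x - S.f s (-1)) =ᶠ[nhds t]
          (fun s => ∫ z in (-1:ℝ)..x, S.fy s z) := by
        filter_upwards [IsOpen.mem_nhds isOpen_Ioi ht] with s hs
        exact S.f_eq_integral (le_of_lt (mem_Ioi.mp hs)) hxIcc
      have hfd' : HasDerivAt (fun s => ∫ z in (-1:ℝ)..x, S.fy s z)
          (S.ft t x - S.ft t (-1)) t := hfd.congr_of_eventuallyEq hev.symm
      exact (hfd'.unique hDI.2)
    · filter_upwards [IsOpen.mem_nhds isOpen_Ioi ht] with s hs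
      exact ContinuousOn.aestronglyMeasurable
        (((sliceY S.cfy (le_of_lt (mem_Ioi.mp hs))).mono hsub)) measurableSet_uIoc
    · exact (((sliceY S.cfy (le_of_lt ht)).mono
        ((uIcc_of_le hxIcc.1) ▸ Icc_subset_Icc (le_refl _) hxIcc.2)).intervalIntegrable)
    · exact ContinuousOn.aestronglyMeasurable
        (((sliceY S.cfty (le_of_lt ht)).mono hsub)) measurableSet_uIoc
    · apply Filter.Eventually.of_forall
      intro z hz s hs
      exact hM s (hball s hs).1 z (hsub hz)
    · exact intervalIntegrable_const
    · apply Filter.Eventually.of_forall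
      intro z hz s hs
      exact S.dfty s (le_of_lt (hball s hs).2) z (hsub hz)
  -- Step B : differentiate the integral
  have hyIcc : y ∈ Icc (-1:ℝ) 1 := Ioo_subset_Icc_self hy
  have hcty : ContinuousOn (fun z => S.fty t z) (Ioo (-1) 1) :=
    (sliceY S.cfty (le_of_lt ht)).mono Ioo_subset_Icc_self
  have hmeas : StronglyMeasurableAtFilter (fun z => S.fty t z) (nhds y) volume :=
    hcty.stronglyMeasurableAtFilter isOpen_Ioo y hy
  have hcat : ContinuousAt (fun z => S.fty t z) y :=
    (sliceY S.cfty (le_of_lt ht)).continuousAt (Icc_mem_nhds hy.1 hy.2)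
  have hint : IntervalIntegrable (fun z => S.fty t z) volume (-1) y :=
    ((sliceY S.cfty (le_of_lt ht)).mono
      ((uIcc_of_le hyIcc.1) ▸ Icc_subset_Icc (le_refl _) hyIcc.2)).intervalIntegrable
  have hB : HasDerivAt (fun x => ∫ z in (-1:ℝ)..x, S.fty t z) (S.fty t y) y :=
    integral_hasDerivAt_right hint hmeas hcat
  have hB' : HasDerivAt (fun x => S.ft t (-1) + ∫ z in (-1:ℝ)..x, S.fty t z)
      (S.fty t y) y := (hB.const_add (S.ft t (-1)))
  apply hB'.congr_of_eventuallyEq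
  filter_upwards [Icc_mem_nhds hy.1 hy.2] with x hx
  have h2 := stepA x hx
  linear_combination h2

end ED




/-- integrability from continuity on the closed interval -/
lemma intInt {g : ℝ → ℂ} (hg : ContinuousOn g (Icc (-1) 1)) :
    IntervalIntegrable g volume (-1) 1 := by
  apply ContinuousOn.intervalIntegrable
  rwa [uIcc_of_le (by norm_num : (-1:ℝ) ≤ 1)]

lemma integral_re_eq {g : ℝ → ℂ} (hg : IntervalIntegrable g volume (-1) 1) :
    ∫ y in (-1:ℝ)..1, (g y).re = (∫ y in (-1:ℝ)..1, g y).re := by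
  have := Complex.reCLM.intervalIntegral_comp_comm hg
  simpa using this

lemma ae_Ioo : ∀ᵐ y : ℝ, y ∈ Ι (-1:ℝ) 1 → y ∈ Ioo (-1:ℝ) 1 := by
  have h := MeasureTheory.Ioo_ae_eq_Ioc (μ := (volume : Measure ℝ)) (a := (-1:ℝ)) (b := 1)
  filter_upwards [Filter.eventuallyEq_set.mp h] with y hy hmem
  rw [uIoc_of_le (by norm_num : (-1:ℝ) ≤ 1)] at hmem
  exact hy.mpr hmem

lemma integral_mulI_re {g : ℝ → ℂ} (hg : IntervalIntegrable g volume (-1) 1) :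
    ∫ y in (-1:ℝ)..1, (Complex.I * g y).re
      = (Complex.I * ∫ y in (-1:ℝ)..1, g y).re := by
  rw [← intervalIntegral.integral_const_mul]
  exact integral_re_eq (hg.const_mul _)

lemma normsq_eq (z : ℂ) : (z * (starRingEnd ℂ) z).re = ‖z‖^2 := by
  rw [Complex.mul_conj, Complex.ofReal_re, Complex.normSq_eq_norm_sq]

namespace ED

variable (S : ED)

def A (t : ℝ) : ℝ := ∫ y in (-1:ℝ)..1, ‖S.f t y‖^2
def B (t : ℝ) : ℝ := ∫ y in (-1:ℝ)..1, ‖S.fy t y‖^2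
def u (s t y : ℝ) : ℂ := S.fy t y + Complex.I * (S.k:ℂ) * ((t:ℂ) - (s:ℂ)) * S.f t y
def uy (s t y : ℝ) : ℂ := S.fyy t y + Complex.I * (S.k:ℂ) * ((t:ℂ) - (s:ℂ)) * S.fy t y
def ut (s t y : ℝ) : ℂ := S.fty t y + Complex.I * (S.k:ℂ) * S.f t y
  + Complex.I * (S.k:ℂ) * ((t:ℂ) - (s:ℂ)) * S.ft t y
def V (s t : ℝ) : ℝ := ∫ y in (-1:ℝ)..1, ‖S.u s t y‖^2
def W (s t : ℝ) : ℝ := ∫ y in (-1:ℝ)..1, ‖S.uy s t y‖^2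

lemma A_nonneg {t : ℝ} : 0 ≤ S.A t :=
  intervalIntegral.integral_nonneg (by norm_num) (fun y _ => sq_nonneg _)
lemma B_nonneg {t : ℝ} : 0 ≤ S.B t :=
  intervalIntegral.integral_nonneg (by norm_num) (fun y _ => sq_nonneg _)
lemma V_nonneg {s t : ℝ} : 0 ≤ S.V s t :=
  intervalIntegral.integral_nonneg (by norm_num) (fun y _ => sq_nonneg _)
lemma W_nonneg {s t : ℝ} : 0 ≤ S.W s t :=
  intervalIntegral.integral_nonneg (by norm_num) (fun y _ => sq_nonneg _)

lemma contA : ContinuousOn S.A (Ici 0) := continuousOn_W S.cf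
lemma contB : ContinuousOn S.B (Ici 0) := continuousOn_W S.cfy

lemma cu (s : ℝ) : ContinuousOn (fun p : ℝ × ℝ => S.u s p.1 p.2) (Ici 0 ×ˢ Icc (-1) 1) := by
  apply S.cfy.add
  apply ContinuousOn.mul _ S.cf
  apply Continuous.continuousOn
  continuity

lemma cut (s : ℝ) : ContinuousOn (fun p : ℝ × ℝ => S.ut s p.1 p.2) (Ici 0 ×ˢ Icc (-1) 1) := by
  apply ContinuousOn.add
  · apply S.cfty.add
    exact (continuous_const.continuousOn.mul S.cf)
  · apply ContinuousOn.mul _ S.cft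
    apply Continuous.continuousOn
    continuity

lemma du (s : ℝ) : ∀ t ∈ Ioi (0:ℝ), ∀ y ∈ Icc (-1:ℝ) 1,
    HasDerivAt (fun τ => S.u s τ y) (S.ut s t y) t := by
  intro t ht y hy
  have h1 : HasDerivAt (fun τ : ℝ => Complex.I * (S.k:ℂ) * ((τ:ℂ) - (s:ℂ)))
      (Complex.I * (S.k:ℂ)) t := by
    have h0 : HasDerivAt (fun τ : ℝ => ((τ:ℝ):ℂ)) 1 t := by
      simpa using (hasDerivAt_id t).ofReal_comp
    simpa using ((h0.sub_const ((s:ℂ))).const_mul (Complex.I * (S.k:ℂ)))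
  have h2 := h1.mul (S.dft t (mem_Ici.mpr (le_of_lt (mem_Ioi.mp ht))) y hy)
  have h3 := (S.dfty t (mem_Ici.mpr (le_of_lt (mem_Ioi.mp ht))) y hy).add h2
  have : S.ut s t y = S.fty t y + (Complex.I * (S.k:ℂ) * S.f t y
      + Complex.I * (S.k:ℂ) * ((t:ℂ) - (s:ℂ)) * S.ft t y) := by
    rw [ut]; ring
  rw [this]
  exact h3

lemma contV (s : ℝ) : ContinuousOn (S.V s) (Ici 0) := continuousOn_W (S.cu s)

lemma hasDerivAt_A {t : ℝ} (ht : 0 < t) :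
    HasDerivAt S.A (∫ y in (-1:ℝ)..1, 2 * (S.ft t y * (starRingEnd ℂ) (S.f t y)).re) t :=
  hasDerivAt_W S.cf S.cft (fun τ hτ y hy => S.dft τ (mem_Ici.mpr (le_of_lt (mem_Ioi.mp hτ))) y hy) ht

lemma hasDerivAt_V (s : ℝ) {t : ℝ} (ht : 0 < t) :
    HasDerivAt (S.V s) (∫ y in (-1:ℝ)..1, 2 * (S.ut s t y * (starRingEnd ℂ) (S.u s t y)).re) t :=
  hasDerivAt_W (S.cu s) (S.cut s) (S.du s) ht



lemma Aderiv_eq {t : ℝ} (ht : 0 < t) :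
    (∫ y in (-1:ℝ)..1, 2 * (S.ft t y * (starRingEnd ℂ) (S.f t y)).re)
      = -(2*S.ν)*S.B t - (2*S.ν*S.k^2)*S.A t := by
  have ht' : (0:ℝ) ≤ t := le_of_lt ht
  have hcf := sliceY S.cf (t := t) ht'
  have hcfy := sliceY S.cfy (t := t) ht'
  have hcfyy := sliceY S.cfyy (t := t) ht'
  have hconj : ∀ {g : ℝ → ℂ}, ContinuousOn g (Icc (-1) 1) →
      ContinuousOn (fun y => (starRingEnd ℂ) (g y)) (Icc (-1:ℝ) 1) :=
    fun hg => Complex.continuous_conj.comp_continuousOn hg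
  -- integration by parts
  have hibp := ibp (fun y => S.fy t y) (fun y => S.f t y)
    (fun y => S.fyy t y) (fun y => S.fy t y) hcfy hcf hcfyy hcfy
    (fun y hy => (S.dfyy t ht' y (Ioo_subset_Icc_self hy)).hasDerivWithinAt)
    (fun y hy => (S.dfy t ht' y (Ioo_subset_Icc_self hy)).hasDerivWithinAt)
  rw [S.f_bdry ht' (Or.inr rfl), S.f_bdry ht' (Or.inl rfl)] at hibp
  simp only [map_zero, mul_zero, sub_zero] at hibp
  -- pointwise identity
  have hpt : ∀ y ∈ Ioo (-1:ℝ) 1,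
      2 * (S.ft t y * (starRingEnd ℂ) (S.f t y)).re
      = 2*S.ν*((S.fyy t y * (starRingEnd ℂ) (S.f t y)
            + S.fy t y * (starRingEnd ℂ) (S.fy t y)).re)
        - 2*S.ν*‖S.fy t y‖^2 - 2*S.ν*S.k^2*‖S.f t y‖^2 := by
    intro y hy
    rw [S.pde t ht' y hy, ← normsq_eq, ← normsq_eq]
    simp only [Complex.mul_re, Complex.mul_im, Complex.add_re, Complex.add_im,
      Complex.sub_re, Complex.sub_im, Complex.I_re, Complex.I_im,
      Complex.conj_re, Complex.conj_im, Complex.ofReal_re, Complex.ofReal_im,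
      pow_two]
    ring
  have hcong : (∫ y in (-1:ℝ)..1, 2 * (S.ft t y * (starRingEnd ℂ) (S.f t y)).re)
      = ∫ y in (-1:ℝ)..1, (2*S.ν*((S.fyy t y * (starRingEnd ℂ) (S.f t y)
            + S.fy t y * (starRingEnd ℂ) (S.fy t y)).re)
        - 2*S.ν*‖S.fy t y‖^2 - 2*S.ν*S.k^2*‖S.f t y‖^2) := by
    apply intervalIntegral.integral_congr_ae
    filter_upwards [ae_Ioo] with y h1 h2
    exact hpt y (h1 h2)
  rw [hcong]
  have hg1 : ContinuousOn (fun y => S.fyy t y * (starRingEnd ℂ) (S.f t y)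
      + S.fy t y * (starRingEnd ℂ) (S.fy t y)) (Icc (-1:ℝ) 1) :=
    (hcfyy.mul (hconj hcf)).add (hcfy.mul (hconj hcfy))
  have hi1 : IntervalIntegrable (fun y => 2*S.ν*((S.fyy t y * (starRingEnd ℂ) (S.f t y)
      + S.fy t y * (starRingEnd ℂ) (S.fy t y)).re)) volume (-1) 1 := by
    apply ContinuousOn.intervalIntegrable
    rw [uIcc_of_le (by norm_num : (-1:ℝ) ≤ 1)]
    exact continuousOn_const.mul (Complex.continuous_re.comp_continuousOn hg1)
  have hi2 : IntervalIntegrable (fun y => 2*S.ν*‖S.fy t y‖^2) volume (-1) 1 := by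
    apply ContinuousOn.intervalIntegrable
    rw [uIcc_of_le (by norm_num : (-1:ℝ) ≤ 1)]
    exact continuousOn_const.mul (hcfy.norm.pow 2)
  have hi3 : IntervalIntegrable (fun y => 2*S.ν*S.k^2*‖S.f t y‖^2) volume (-1) 1 := by
    apply ContinuousOn.intervalIntegrable
    rw [uIcc_of_le (by norm_num : (-1:ℝ) ≤ 1)]
    exact continuousOn_const.mul (hcf.norm.pow 2)
  rw [intervalIntegral.integral_sub (hi1.sub hi2) hi3,
      intervalIntegral.integral_sub hi1 hi2,
      intervalIntegral.integral_const_mul, intervalIntegral.integral_const_mul,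
      intervalIntegral.integral_const_mul,
      integral_re_eq (intInt hg1), hibp]
  simp only [Complex.zero_re, mul_zero]
  show 0 - 2*S.ν*S.B t - 2*S.ν*S.k^2*S.A t = _
  ring


lemma Vderiv_eq (s : ℝ) {t : ℝ} (ht : 0 < t) :
    (∫ y in (-1:ℝ)..1, 2 * (S.ut s t y * (starRingEnd ℂ) (S.u s t y)).re)
      = -(2*S.ν)*S.W s t - (2*S.ν*S.k^2)*S.V s t := by
  have ht' : (0:ℝ) ≤ t := le_of_lt ht
  set c : ℂ := Complex.I * (S.k:ℂ) * ((t:ℂ) - (s:ℂ)) with hc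
  set a : ℝ := S.k * (t - s) with ha
  have hcf := sliceY S.cf (t := t) ht'
  have hcfy := sliceY S.cfy (t := t) ht'
  have hcfyy := sliceY S.cfyy (t := t) ht'
  have hcft := sliceY S.cft (t := t) ht'
  have hcfty := sliceY S.cfty (t := t) ht'
  have hconj : ∀ {g : ℝ → ℂ}, ContinuousOn g (Icc (-1) 1) →
      ContinuousOn (fun y => (starRingEnd ℂ) (g y)) (Icc (-1:ℝ) 1) :=
    fun hg => Complex.continuous_conj.comp_continuousOn hg
  have hcu : ContinuousOn (fun y => S.u s t y) (Icc (-1:ℝ) 1) := by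
    simp only [u]; exact hcfy.add (continuousOn_const.mul hcf)
  have hcuy : ContinuousOn (fun y => S.uy s t y) (Icc (-1:ℝ) 1) := by
    simp only [uy]; exact hcfyy.add (continuousOn_const.mul hcfy)
  have hcyf : ContinuousOn (fun y : ℝ => (y:ℂ) * S.f t y) (Icc (-1:ℝ) 1) :=
    (Complex.continuous_ofReal.continuousOn).mul hcf
  have hcyf' : ContinuousOn (fun y : ℝ => S.f t y + (y:ℂ) * S.fy t y) (Icc (-1:ℝ) 1) :=
    hcf.add ((Complex.continuous_ofReal.continuousOn).mul hcfy)
  -- derivatives in y on Ioo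
  have hdu : ∀ y ∈ Ioo (-1:ℝ) 1,
      HasDerivWithinAt (fun y => S.u s t y) (S.uy s t y) (Ioi y) y := by
    intro y hy
    have := ((S.dfyy t ht' y (Ioo_subset_Icc_self hy)).add
      ((S.dfy t ht' y (Ioo_subset_Icc_self hy)).const_mul c))
    exact this.hasDerivWithinAt
  have hdf : ∀ y ∈ Ioo (-1:ℝ) 1,
      HasDerivWithinAt (fun y => S.f t y) (S.fy t y) (Ioi y) y :=
    fun y hy => (S.dfy t ht' y (Ioo_subset_Icc_self hy)).hasDerivWithinAt
  have hdft : ∀ y ∈ Ioo (-1:ℝ) 1,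
      HasDerivWithinAt (fun y => S.ft t y) (S.fty t y) (Ioi y) y :=
    fun y hy => (S.hasDerivAt_ft_y ht hy).hasDerivWithinAt
  have hdyf : ∀ y ∈ Ioo (-1:ℝ) 1,
      HasDerivWithinAt (fun y : ℝ => (y:ℂ) * S.f t y)
        (S.f t y + (y:ℂ) * S.fy t y) (Ioi y) y := by
    intro y hy
    have h0 : HasDerivAt (fun y : ℝ => ((y:ℝ):ℂ)) 1 y := by
      simpa using (hasDerivAt_id y).ofReal_comp
    have := h0.mul (S.dfy t ht' y (Ioo_subset_Icc_self hy))
    rw [one_mul] at this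
    exact this.hasDerivWithinAt
  -- the four integration-by-parts identities
  have hibp1 := ibp (fun y => S.ft t y) (fun y => S.u s t y)
    (fun y => S.fty t y) (fun y => S.uy s t y) hcft hcu hcfty hcuy hdft hdu
  rw [S.ft_bdry ht (Or.inr rfl), S.ft_bdry ht (Or.inl rfl)] at hibp1
  simp only [zero_mul, sub_zero] at hibp1
  have hibp2 := ibp (fun y : ℝ => (y:ℂ) * S.f t y) (fun y => S.u s t y)
    (fun y : ℝ => S.f t y + (y:ℂ) * S.fy t y) (fun y => S.uy s t y)
    hcyf hcu hcyf' hcuy hdyf hdu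
  rw [S.f_bdry ht' (Or.inr rfl), S.f_bdry ht' (Or.inl rfl)] at hibp2
  simp only [mul_zero, zero_mul, sub_zero] at hibp2
  have hibp3 := ibp (fun y => S.u s t y) (fun y => S.u s t y)
    (fun y => S.uy s t y) (fun y => S.uy s t y) hcu hcu hcuy hcuy hdu hdu
  have hibp4 := ibp (fun y => S.f t y) (fun y => S.u s t y)
    (fun y => S.fy t y) (fun y => S.uy s t y) hcf hcu hcfy hcuy hdf hdu
  rw [S.f_bdry ht' (Or.inr rfl), S.f_bdry ht' (Or.inl rfl)] at hibp4
  simp only [zero_mul, sub_zero, map_zero, mul_zero] at hibp4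
  -- pointwise identity
  have hpt : ∀ y ∈ Ioo (-1:ℝ) 1,
      2 * (S.ut s t y * (starRingEnd ℂ) (S.u s t y)).re
      = (-(2*S.ν)*‖S.uy s t y‖^2 - (2*S.ν*S.k^2)*‖S.u s t y‖^2)
        + (2*((S.fty t y * (starRingEnd ℂ) (S.u s t y)
              + S.ft t y * (starRingEnd ℂ) (S.uy s t y)).re)
        + (2*S.ν*a)*((Complex.I*(S.uy s t y * (starRingEnd ℂ) (S.u s t y)
              + S.u s t y * (starRingEnd ℂ) (S.uy s t y))).re)
        + (2*S.ν*(S.k^2+a^2))*((S.fy t y * (starRingEnd ℂ) (S.u s t y)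
              + S.f t y * (starRingEnd ℂ) (S.uy s t y)).re)
        + (2*S.k)*((Complex.I*((S.f t y + (y:ℂ) * S.fy t y) * (starRingEnd ℂ) (S.u s t y)
              + ((y:ℂ) * S.f t y) * (starRingEnd ℂ) (S.uy s t y))).re)) := by
    intro y hy
    rw [← normsq_eq, ← normsq_eq]
    simp only [u, uy, ut, hc, ha]
    rw [S.pde t ht' y hy]
    simp only [map_add, map_mul, map_sub, Complex.conj_I, Complex.conj_ofReal, map_pow]
    simp only [Complex.mul_re, Complex.mul_im, Complex.add_re, Complex.add_im,
      Complex.sub_re, Complex.sub_im, Complex.I_re, Complex.I_im, Complex.neg_re,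
      Complex.neg_im, Complex.conj_re, Complex.conj_im,
      Complex.ofReal_re, Complex.ofReal_im, pow_two]
    ring
  -- use it under the integral
  have hcong : (∫ y in (-1:ℝ)..1, 2 * (S.ut s t y * (starRingEnd ℂ) (S.u s t y)).re)
      = ∫ y in (-1:ℝ)..1,
        ((-(2*S.ν)*‖S.uy s t y‖^2 - (2*S.ν*S.k^2)*‖S.u s t y‖^2)
        + (2*((S.fty t y * (starRingEnd ℂ) (S.u s t y)
              + S.ft t y * (starRingEnd ℂ) (S.uy s t y)).re)
        + (2*S.ν*a)*((Complex.I*(S.uy s t y * (starRingEnd ℂ) (S.u s t y)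
              + S.u s t y * (starRingEnd ℂ) (S.uy s t y))).re)
        + (2*S.ν*(S.k^2+a^2))*((S.fy t y * (starRingEnd ℂ) (S.u s t y)
              + S.f t y * (starRingEnd ℂ) (S.uy s t y)).re)
        + (2*S.k)*((Complex.I*((S.f t y + (y:ℂ) * S.fy t y) * (starRingEnd ℂ) (S.u s t y)
              + ((y:ℂ) * S.f t y) * (starRingEnd ℂ) (S.uy s t y))).re))) := by
    apply intervalIntegral.integral_congr_ae
    filter_upwards [ae_Ioo] with y h1 h2
    exact hpt y (h1 h2)
  rw [hcong]
  -- names for the four complex integrands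
  set g1 : ℝ → ℂ := fun y => S.fty t y * (starRingEnd ℂ) (S.u s t y)
      + S.ft t y * (starRingEnd ℂ) (S.uy s t y) with hg1
  set g3 : ℝ → ℂ := fun y => S.uy s t y * (starRingEnd ℂ) (S.u s t y)
      + S.u s t y * (starRingEnd ℂ) (S.uy s t y) with hg3
  set g4 : ℝ → ℂ := fun y => S.fy t y * (starRingEnd ℂ) (S.u s t y)
      + S.f t y * (starRingEnd ℂ) (S.uy s t y) with hg4
  set g2 : ℝ → ℂ := fun y => (S.f t y + (y:ℂ) * S.fy t y) * (starRingEnd ℂ) (S.u s t y)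
      + ((y:ℂ) * S.f t y) * (starRingEnd ℂ) (S.uy s t y) with hg2
  have hcg1 : ContinuousOn g1 (Icc (-1:ℝ) 1) :=
    (hcfty.mul (hconj hcu)).add (hcft.mul (hconj hcuy))
  have hcg3 : ContinuousOn g3 (Icc (-1:ℝ) 1) :=
    (hcuy.mul (hconj hcu)).add (hcu.mul (hconj hcuy))
  have hcg4 : ContinuousOn g4 (Icc (-1:ℝ) 1) :=
    (hcfy.mul (hconj hcu)).add (hcf.mul (hconj hcuy))
  have hcg2 : ContinuousOn g2 (Icc (-1:ℝ) 1) :=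
    (hcyf'.mul (hconj hcu)).add (hcyf.mul (hconj hcuy))
  -- integrability of the real terms
  have hiW : IntervalIntegrable (fun y => -(2*S.ν)*‖S.uy s t y‖^2
      - (2*S.ν*S.k^2)*‖S.u s t y‖^2) volume (-1) 1 := by
    apply ContinuousOn.intervalIntegrable
    rw [uIcc_of_le (by norm_num : (-1:ℝ) ≤ 1)]
    exact (continuousOn_const.mul (hcuy.norm.pow 2)).sub
      (continuousOn_const.mul (hcu.norm.pow 2))
  have hr1 : IntervalIntegrable (fun y => 2*((g1 y).re)) volume (-1) 1 := by
    apply ContinuousOn.intervalIntegrable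
    rw [uIcc_of_le (by norm_num : (-1:ℝ) ≤ 1)]
    exact continuousOn_const.mul (Complex.continuous_re.comp_continuousOn hcg1)
  have hr3 : IntervalIntegrable (fun y => (2*S.ν*a)*((Complex.I * g3 y).re)) volume (-1) 1 := by
    apply ContinuousOn.intervalIntegrable
    rw [uIcc_of_le (by norm_num : (-1:ℝ) ≤ 1)]
    exact continuousOn_const.mul (Complex.continuous_re.comp_continuousOn
      (continuousOn_const.mul hcg3))
  have hr4 : IntervalIntegrable (fun y => (2*S.ν*(S.k^2+a^2))*((g4 y).re)) volume (-1) 1 := by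
    apply ContinuousOn.intervalIntegrable
    rw [uIcc_of_le (by norm_num : (-1:ℝ) ≤ 1)]
    exact continuousOn_const.mul (Complex.continuous_re.comp_continuousOn hcg4)
  have hr2 : IntervalIntegrable (fun y => (2*S.k)*((Complex.I * g2 y).re)) volume (-1) 1 := by
    apply ContinuousOn.intervalIntegrable
    rw [uIcc_of_le (by norm_num : (-1:ℝ) ≤ 1)]
    exact continuousOn_const.mul (Complex.continuous_re.comp_continuousOn
      (continuousOn_const.mul hcg2))
  -- split the integral
  rw [intervalIntegral.integral_add hiW (((hr1.add hr3).add hr4).add hr2),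
      intervalIntegral.integral_add ((hr1.add hr3).add hr4) hr2,
      intervalIntegral.integral_add (hr1.add hr3) hr4,
      intervalIntegral.integral_add hr1 hr3]
  have e1 : ∫ y in (-1:ℝ)..1, 2*((g1 y).re) = 0 := by
    rw [intervalIntegral.integral_const_mul, integral_re_eq (intInt hcg1), hibp1]
    simp
  have e3 : ∫ y in (-1:ℝ)..1, (2*S.ν*a)*((Complex.I * g3 y).re) = 0 := by
    rw [intervalIntegral.integral_const_mul, integral_mulI_re (intInt hcg3), hibp3]
    rw [Complex.mul_conj, Complex.mul_conj]
    simp [Complex.mul_re]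
  have e4 : ∫ y in (-1:ℝ)..1, (2*S.ν*(S.k^2+a^2))*((g4 y).re) = 0 := by
    rw [intervalIntegral.integral_const_mul, integral_re_eq (intInt hcg4), hibp4]
    simp
  have e2 : ∫ y in (-1:ℝ)..1, (2*S.k)*((Complex.I * g2 y).re) = 0 := by
    rw [intervalIntegral.integral_const_mul, integral_mulI_re (intInt hcg2), hibp2]
    simp
  rw [e1, e3, e4, e2]
  have eW : ∫ y in (-1:ℝ)..1, (-(2*S.ν)*‖S.uy s t y‖^2 - (2*S.ν*S.k^2)*‖S.u s t y‖^2)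
      = -(2*S.ν)*S.W s t - (2*S.ν*S.k^2)*S.V s t := by
    have hiWa : IntervalIntegrable (fun y => -(2*S.ν)*‖S.uy s t y‖^2) volume (-1) 1 := by
      apply ContinuousOn.intervalIntegrable
      rw [uIcc_of_le (by norm_num : (-1:ℝ) ≤ 1)]
      exact continuousOn_const.mul (hcuy.norm.pow 2)
    have hiWb : IntervalIntegrable (fun y => (2*S.ν*S.k^2)*‖S.u s t y‖^2) volume (-1) 1 := by
      apply ContinuousOn.intervalIntegrable
      rw [uIcc_of_le (by norm_num : (-1:ℝ) ≤ 1)]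
      exact continuousOn_const.mul (hcu.norm.pow 2)
    rw [intervalIntegral.integral_sub hiWa hiWb,
        intervalIntegral.integral_const_mul, intervalIntegral.integral_const_mul]
    rfl
  rw [eW]
  ring

lemma hasDerivAt_A' {t : ℝ} (ht : 0 < t) :
    HasDerivAt S.A (-(2*S.ν)*S.B t - (2*S.ν*S.k^2)*S.A t) t := by
  rw [← S.Aderiv_eq ht]
  exact S.hasDerivAt_A ht

lemma hasDerivAt_V' (s : ℝ) {t : ℝ} (ht : 0 < t) :
    HasDerivAt (S.V s) (-(2*S.ν)*S.W s t - (2*S.ν*S.k^2)*S.V s t) t := by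
  rw [← S.Vderiv_eq s ht]
  exact S.hasDerivAt_V s ht

lemma A_antitone : AntitoneOn S.A (Ici 0) := by
  apply antitoneOn_of_deriv_nonpos (convex_Ici 0) S.contA
  · intro x hx
    rw [interior_Ici] at hx
    exact (S.hasDerivAt_A' hx).differentiableAt.differentiableWithinAt
  · intro x hx
    rw [interior_Ici] at hx
    rw [(S.hasDerivAt_A' hx).deriv]
    have h1 := S.A_nonneg (t := x)
    have h2 := S.B_nonneg (t := x)
    have h3 := S.hν
    have h4 := sq_nonneg S.k
    nlinarith [mul_nonneg (mul_nonneg h3.le h4) h1, mul_nonneg h3.le h2]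

lemma V_antitone (s : ℝ) : AntitoneOn (S.V s) (Ici 0) := by
  apply antitoneOn_of_deriv_nonpos (convex_Ici 0) (S.contV s)
  · intro x hx
    rw [interior_Ici] at hx
    exact (S.hasDerivAt_V' s hx).differentiableAt.differentiableWithinAt
  · intro x hx
    rw [interior_Ici] at hx
    rw [(S.hasDerivAt_V' s hx).deriv]
    have h1 := S.V_nonneg (s := s) (t := x)
    have h2 := S.W_nonneg (s := s) (t := x)
    have h3 := S.hν
    have h4 := sq_nonneg S.k
    nlinarith [mul_nonneg (mul_nonneg h3.le h4) h1, mul_nonneg h3.le h2]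

lemma V_self (s : ℝ) : S.V s s = S.B s := by
  unfold V B u
  congr 1
  funext y
  simp

lemma V_le {s τ : ℝ} (hs : 0 ≤ s) (hτ : s ≤ τ) : S.V s τ ≤ S.B s := by
  rw [← S.V_self s]
  exact S.V_antitone s hs (le_trans hs hτ) hτ

lemma contB_sub {t : ℝ} (ht : 0 ≤ t) {a b : ℝ} (ha : 0 ≤ a) (hb : b ≤ t)
    : ContinuousOn S.B (Icc a b) :=
  S.contB.mono (fun x hx => le_trans ha hx.1)

lemma energy {t : ℝ} (ht : 0 ≤ t) :
    S.A t = S.A 0 - (∫ τ in (0:ℝ)..t, (2*S.ν*S.B τ + 2*S.ν*S.k^2*S.A τ)) := by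
  have hsub : Icc (0:ℝ) t ⊆ Ici 0 := fun x hx => hx.1
  have hg : ContinuousOn (fun τ => -(2*S.ν*S.B τ + 2*S.ν*S.k^2*S.A τ)) (Icc 0 t) := by
    apply ContinuousOn.neg
    exact (continuousOn_const.mul (S.contB.mono hsub)).add
      (continuousOn_const.mul (S.contA.mono hsub))
  have hint : IntervalIntegrable (fun τ => -(2*S.ν*S.B τ + 2*S.ν*S.k^2*S.A τ)) volume 0 t := by
    apply ContinuousOn.intervalIntegrable
    rwa [uIcc_of_le ht]
  have h := integral_eq_sub_of_hasDeriv_right_of_le ht (S.contA.mono hsub)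
    (f' := fun τ => -(2*S.ν*S.B τ + 2*S.ν*S.k^2*S.A τ))
    (fun x hx => by
      have := (S.hasDerivAt_A' hx.1).hasDerivWithinAt (s := Ioi x)
      convert this using 1
      ring) hint
  rw [intervalIntegral.integral_neg] at h
  linarith [h]

lemma intInt_norm_fy {t : ℝ} (ht : 0 ≤ t) :
    IntervalIntegrable (fun z => ‖S.fy t z‖) volume (-1) 1 := by
  apply ContinuousOn.intervalIntegrable
  rw [uIcc_of_le (by norm_num : (-1:ℝ) ≤ 1)]
  exact (sliceY S.cfy ht).norm

lemma norm_f_le {t : ℝ} (ht : 0 ≤ t) {x : ℝ} (hx : x ∈ Icc (-1:ℝ) 1) :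
    ‖S.f t x‖ ≤ ∫ z in (-1:ℝ)..1, ‖S.fy t z‖ := by
  have h := S.f_eq_integral ht hx
  rw [S.f_bdry ht (Or.inl rfl), sub_zero] at h
  rw [h]
  calc ‖∫ z in (-1:ℝ)..x, S.fy t z‖ ≤ ∫ z in (-1:ℝ)..x, ‖S.fy t z‖ :=
        intervalIntegral.norm_integral_le_integral_norm hx.1
    _ ≤ ∫ z in (-1:ℝ)..1, ‖S.fy t z‖ := by
        apply intervalIntegral.integral_mono_interval (le_refl (-1:ℝ)) hx.1 hx.2
        · exact Filter.Eventually.of_forall (fun z => norm_nonneg _)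
        · exact S.intInt_norm_fy ht

lemma intnorm_le_sqrt {t : ℝ} (ht : 0 ≤ t) :
    (∫ z in (-1:ℝ)..1, ‖S.fy t z‖) ≤ Real.sqrt (2 * S.B t) := by
  have hBnn := S.B_nonneg (t := t)
  have hint2 : IntervalIntegrable (fun z => ‖S.fy t z‖^2) volume (-1) 1 :=
    integrable_sq S.cfy ht
  have hI : ∀ c : ℝ, 0 < c → (∫ z in (-1:ℝ)..1, ‖S.fy t z‖) ≤ S.B t/(2*c) + c := by
    intro c hc
    have hpt : ∀ z ∈ Icc (-1:ℝ) 1, ‖S.fy t z‖ ≤ ‖S.fy t z‖^2/(2*c) + c/2 := by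
      intro z _
      rw [div_add_div _ _ (by positivity) (by norm_num : (2:ℝ) ≠ 0), le_div_iff₀ (by positivity)]
      nlinarith [sq_nonneg (‖S.fy t z‖ - c)]
    have hintr : IntervalIntegrable (fun z => ‖S.fy t z‖^2/(2*c) + c/2) volume (-1) 1 :=
      (hint2.div_const _).add intervalIntegrable_const
    calc (∫ z in (-1:ℝ)..1, ‖S.fy t z‖)
        ≤ ∫ z in (-1:ℝ)..1, (‖S.fy t z‖^2/(2*c) + c/2) :=
          intervalIntegral.integral_mono_on (by norm_num) (S.intInt_norm_fy ht) hintr hpt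
      _ = S.B t/(2*c) + c := by
          rw [intervalIntegral.integral_add (hint2.div_const _) intervalIntegrable_const,
            intervalIntegral.integral_div, intervalIntegral.integral_const]
          show S.B t / (2*c) + (1 - (-1)) • (c/2) = _
          rw [smul_eq_mul]
          ring
  rcases eq_or_lt_of_le hBnn with hB0 | hBpos
  · have h0 : Real.sqrt (2 * S.B t) = 0 := by rw [← hB0]; simp
    rw [h0]
    by_contra hcon
    push_neg at hcon
    have hc := hI ((∫ z in (-1:ℝ)..1, ‖S.fy t z‖)/2) (by linarith)
    rw [← hB0] at hc
    simp only [zero_div, zero_add] at hc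
    linarith
  · set r := Real.sqrt (2 * S.B t) with hr
    have hrpos : 0 < r := Real.sqrt_pos.mpr (by linarith)
    have hr2 : r^2 = 2 * S.B t := Real.sq_sqrt (by linarith)
    have := hI (r/2) (by linarith)
    have heq : S.B t/(2*(r/2)) + r/2 = r := by
      field_simp
      nlinarith
    linarith [heq ▸ this]

lemma A_le_4B {t : ℝ} (ht : 0 ≤ t) : S.A t ≤ 4 * S.B t := by
  have hBnn := S.B_nonneg (t := t)
  have h1 : ∀ y ∈ Icc (-1:ℝ) 1, ‖S.f t y‖^2 ≤ 2 * S.B t := by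
    intro y hy
    have ha := (S.norm_f_le ht hy).trans (S.intnorm_le_sqrt ht)
    have := Real.sq_sqrt (by linarith : (0:ℝ) ≤ 2 * S.B t)
    nlinarith [norm_nonneg (S.f t y), Real.sqrt_nonneg (2 * S.B t)]
  calc S.A t ≤ ∫ y in (-1:ℝ)..1, 2*S.B t :=
        intervalIntegral.integral_mono_on (by norm_num) (integrable_sq S.cf ht)
          intervalIntegrable_const h1
    _ = 4 * S.B t := by
        rw [intervalIntegral.integral_const]
        show (1 - (-1)) • (2 * S.B t) = _
        rw [smul_eq_mul]; ring

lemma key {s τ : ℝ} (hτ : 0 ≤ τ) :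
    S.k^2*(τ-s)^2 * S.A τ ≤ 2 * S.V s τ + 2 * S.B τ := by
  have hpt : ∀ y ∈ Icc (-1:ℝ) 1,
      S.k^2*(τ-s)^2 * ‖S.f τ y‖^2 ≤ 2*‖S.u s τ y‖^2 + 2*‖S.fy τ y‖^2 := by
    intro y hy
    have hrel : Complex.I * (S.k:ℂ) * ((τ:ℂ)-(s:ℂ)) * S.f τ y
        = S.u s τ y - S.fy τ y := by
      rw [u]; ring
    have h1 : ‖Complex.I * (S.k:ℂ) * ((τ:ℂ)-(s:ℂ)) * S.f τ y‖
        = |S.k| * |τ - s| * ‖S.f τ y‖ := by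
      have : ((τ:ℂ)-(s:ℂ)) = (((τ - s : ℝ)):ℂ) := by push_cast; ring
      rw [this, norm_mul, norm_mul, norm_mul]
      simp only [Complex.norm_I, Complex.norm_real, Real.norm_eq_abs, one_mul]
    have h3 : |S.k| * |τ - s| * ‖S.f τ y‖ = ‖S.u s τ y - S.fy τ y‖ := by
      rw [← h1, hrel]
    have h4 : S.k^2*(τ-s)^2*‖S.f τ y‖^2 = ‖S.u s τ y - S.fy τ y‖^2 := by
      rw [← h3, mul_pow, mul_pow, _root_.sq_abs, _root_.sq_abs]
    have h2 : ‖S.u s τ y - S.fy τ y‖ ≤ ‖S.u s τ y‖ + ‖S.fy τ y‖ := norm_sub_le _ _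
    have h5 : ‖S.u s τ y - S.fy τ y‖^2 ≤ (‖S.u s τ y‖ + ‖S.fy τ y‖)^2 := by
      have := norm_nonneg (S.u s τ y - S.fy τ y)
      nlinarith
    nlinarith [sq_nonneg (‖S.u s τ y‖ - ‖S.fy τ y‖)]
  have hτ' : τ ∈ Ici (0:ℝ) := hτ
  have hiu : IntervalIntegrable (fun y => 2*‖S.u s τ y‖^2 + 2*‖S.fy τ y‖^2) volume (-1) 1 :=
    ((integrable_sq (S.cu s) hτ).const_mul 2).add ((integrable_sq S.cfy hτ).const_mul 2)
  have hif : IntervalIntegrable (fun y => S.k^2*(τ-s)^2 * ‖S.f τ y‖^2) volume (-1) 1 :=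
    (integrable_sq S.cf hτ).const_mul _
  calc S.k^2*(τ-s)^2 * S.A τ
      = ∫ y in (-1:ℝ)..1, S.k^2*(τ-s)^2 * ‖S.f τ y‖^2 := by
        rw [intervalIntegral.integral_const_mul]; rfl
    _ ≤ ∫ y in (-1:ℝ)..1, (2*‖S.u s τ y‖^2 + 2*‖S.fy τ y‖^2) :=
        intervalIntegral.integral_mono_on (by norm_num) hif hiu hpt
    _ = 2 * S.V s τ + 2 * S.B τ := by
        rw [intervalIntegral.integral_add ((integrable_sq (S.cu s) hτ).const_mul 2)
          ((integrable_sq S.cfy hτ).const_mul 2),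
          intervalIntegral.integral_const_mul, intervalIntegral.integral_const_mul]
        rfl

lemma main_bound {t : ℝ} (ht : 0 ≤ t) :
    (1 + S.ν*t + S.ν*S.k^2*t^3) * S.A t ≤ 30 * S.A 0 := by
  have hA0 := S.A_nonneg (t := 0)
  have hAtnn := S.A_nonneg (t := t)
  rcases eq_or_lt_of_le ht with h0 | htpos
  · rw [← h0]
    norm_num
    linarith
  have hAt_le : S.A t ≤ S.A 0 := S.A_antitone (self_mem_Ici) ht ht
  have hsub : Icc (0:ℝ) t ⊆ Ici 0 := fun x hx => hx.1
  have hiB : IntervalIntegrable S.B volume 0 t := by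
    apply ContinuousOn.intervalIntegrable
    rw [uIcc_of_le ht]
    exact S.contB.mono hsub
  have hiA : IntervalIntegrable S.A volume 0 t := by
    apply ContinuousOn.intervalIntegrable
    rw [uIcc_of_le ht]
    exact S.contA.mono hsub
  -- energy inequality : 2ν∫B ≤ A0 - At
  have hEB : 2*S.ν*(∫ τ in (0:ℝ)..t, S.B τ) ≤ S.A 0 - S.A t := by
    have he := S.energy ht
    have hsplit : (∫ τ in (0:ℝ)..t, (2*S.ν*S.B τ + 2*S.ν*S.k^2*S.A τ))
        = 2*S.ν*(∫ τ in (0:ℝ)..t, S.B τ) + 2*S.ν*S.k^2*(∫ τ in (0:ℝ)..t, S.A τ) := by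
      rw [intervalIntegral.integral_add (hiB.const_mul _) (hiA.const_mul _),
        intervalIntegral.integral_const_mul, intervalIntegral.integral_const_mul]
    have hIAnn : 0 ≤ ∫ τ in (0:ℝ)..t, S.A τ :=
      intervalIntegral.integral_nonneg ht (fun τ _ => S.A_nonneg)
    have hnn : 0 ≤ 2*S.ν*S.k^2*(∫ τ in (0:ℝ)..t, S.A τ) := by
      have := S.hν
      have := sq_nonneg S.k
      positivity
    rw [hsplit] at he
    linarith
  -- Poincaré lower bound on ∫B
  have hPB : t * (S.A t/4) ≤ ∫ τ in (0:ℝ)..t, S.B τ := by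
    have hmono := intervalIntegral.integral_mono_on (μ := volume)
      (f := fun _ => S.A t/4) (g := S.B) ht intervalIntegrable_const hiB
      (fun τ hτm => by
        have h1 : S.A t ≤ S.A τ := S.A_antitone hτm.1 ht hτm.2
        have h2 : S.A τ ≤ 4 * S.B τ := S.A_le_4B hτm.1
        linarith)
    rw [intervalIntegral.integral_const, smul_eq_mul, sub_zero] at hmono
    exact hmono
  -- νtA(t) ≤ 2A(0)
  have final2 : S.ν*t*S.A t ≤ 2*S.A 0 := by
    have q := mul_le_mul_of_nonneg_left hPB (by linarith [S.hν] : (0:ℝ) ≤ 2*S.ν)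
    have e : 2*S.ν*(t*(S.A t/4)) = S.ν*t*S.A t/2 := by ring
    rw [e] at q
    linarith
  -- the vector-field estimate : νk²t³A(t) ≤ 27A(0)
  have ht3 : (0:ℝ) < t/3 := by linarith
  obtain ⟨s₀, hs₀mem, hs₀min⟩ := (isCompact_Icc (a := (0:ℝ)) (b := t/3)).exists_isMinOn
    (nonempty_Icc.mpr (by linarith)) (S.contB.mono (fun x hx => hx.1))
  obtain ⟨τ₀, hτ₀mem, hτ₀min⟩ := (isCompact_Icc (a := 2*t/3) (b := t)).exists_isMinOn
    (nonempty_Icc.mpr (by linarith)) (S.contB.mono (fun x hx => le_trans (by linarith) hx.1))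
  have hs₀0 : 0 ≤ s₀ := hs₀mem.1
  have hτ₀0 : 0 ≤ τ₀ := le_trans (by linarith) hτ₀mem.1
  have hs₀τ₀ : s₀ ≤ τ₀ := le_trans hs₀mem.2 (le_trans (by linarith) hτ₀mem.1)
  have hiB1 : IntervalIntegrable S.B volume 0 (t/3) := by
    apply ContinuousOn.intervalIntegrable
    rw [uIcc_of_le (by linarith)]
    exact S.contB.mono (fun x hx => hx.1)
  have hiB2 : IntervalIntegrable S.B volume (t/3) (2*t/3) := by
    apply ContinuousOn.intervalIntegrable
    rw [uIcc_of_le (by linarith)]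
    exact S.contB.mono (fun x hx => le_trans (by linarith) hx.1)
  have hiB3 : IntervalIntegrable S.B volume (2*t/3) t := by
    apply ContinuousOn.intervalIntegrable
    rw [uIcc_of_le (by linarith)]
    exact S.contB.mono (fun x hx => le_trans (by linarith) hx.1)
  have hBs : S.B s₀ * (t/3) ≤ ∫ τ in (0:ℝ)..(t/3), S.B τ := by
    have hmono := intervalIntegral.integral_mono_on (μ := volume)
      (f := fun _ => S.B s₀) (g := S.B) (by linarith : (0:ℝ) ≤ t/3)
      intervalIntegrable_const hiB1 (fun x hx => hs₀min hx)
    rw [intervalIntegral.integral_const, smul_eq_mul, sub_zero] at hmono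
    linarith
  have hBτ : S.B τ₀ * (t/3) ≤ ∫ τ in (2*t/3)..t, S.B τ := by
    have hmono := intervalIntegral.integral_mono_on (μ := volume)
      (f := fun _ => S.B τ₀) (g := S.B) (by linarith : 2*t/3 ≤ t)
      intervalIntegrable_const hiB3 (fun x hx => hτ₀min hx)
    rw [intervalIntegral.integral_const, smul_eq_mul] at hmono
    have e : (t - 2*t/3) = t/3 := by ring
    rw [e] at hmono
    linarith
  have hadj : (∫ τ in (0:ℝ)..(t/3), S.B τ) + (∫ τ in (t/3)..(2*t/3), S.B τ)
      + (∫ τ in (2*t/3)..t, S.B τ) = ∫ τ in (0:ℝ)..t, S.B τ := by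
    rw [intervalIntegral.integral_add_adjacent_intervals hiB1 hiB2,
      intervalIntegral.integral_add_adjacent_intervals (hiB1.trans hiB2) hiB3]
  have hmid : 0 ≤ ∫ τ in (t/3)..(2*t/3), S.B τ :=
    intervalIntegral.integral_nonneg (by linarith) (fun τ _ => S.B_nonneg)
  have hkey := S.key (s := s₀) (τ := τ₀) hτ₀0
  have hV : S.V s₀ τ₀ ≤ S.B s₀ := S.V_le hs₀0 hs₀τ₀
  have hAτ : S.A t ≤ S.A τ₀ := S.A_antitone hτ₀0 ht hτ₀mem.2
  have hfac : (t/3)^2 ≤ (τ₀ - s₀)^2 := by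
    have h1 : t/3 ≤ τ₀ - s₀ := by
      have := hs₀mem.2
      have := hτ₀mem.1
      linarith
    nlinarith
  have c1 : S.k^2*(t/3)^2*S.A t ≤ S.k^2*(τ₀-s₀)^2*S.A τ₀ := by
    have step1 : (t/3)^2 * S.A t ≤ (τ₀-s₀)^2 * S.A τ₀ :=
      mul_le_mul hfac hAτ hAtnn (sq_nonneg _)
    calc S.k^2*(t/3)^2*S.A t = S.k^2*((t/3)^2*S.A t) := by ring
      _ ≤ S.k^2*((τ₀-s₀)^2*S.A τ₀) := mul_le_mul_of_nonneg_left step1 (sq_nonneg _)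
      _ = S.k^2*(τ₀-s₀)^2*S.A τ₀ := by ring
  have c2 : S.k^2*(t/3)^2*S.A t ≤ 2*S.B s₀ + 2*S.B τ₀ := by
    calc S.k^2*(t/3)^2*S.A t ≤ S.k^2*(τ₀-s₀)^2*S.A τ₀ := c1
      _ ≤ 2*S.V s₀ τ₀ + 2*S.B τ₀ := hkey
      _ ≤ 2*S.B s₀ + 2*S.B τ₀ := by linarith
  have c3 : (t/3)*(S.k^2*(t/3)^2*S.A t) ≤ (t/3)*(2*S.B s₀ + 2*S.B τ₀) :=
    mul_le_mul_of_nonneg_left c2 (by linarith)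
  have c4 : (t/3)*(2*S.B s₀ + 2*S.B τ₀) ≤ 2*(∫ τ in (0:ℝ)..t, S.B τ) := by
    have e : (t/3)*(2*S.B s₀ + 2*S.B τ₀) = 2*(S.B s₀*(t/3)) + 2*(S.B τ₀*(t/3)) := by ring
    rw [e]
    linarith
  have c5 : S.ν*((t/3)*(S.k^2*(t/3)^2*S.A t)) ≤ S.ν*(2*(∫ τ in (0:ℝ)..t, S.B τ)) :=
    mul_le_mul_of_nonneg_left (c3.trans c4) S.hν.le
  have c6 : S.ν*(2*(∫ τ in (0:ℝ)..t, S.B τ)) ≤ S.A 0 := by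
    have e : S.ν*(2*(∫ τ in (0:ℝ)..t, S.B τ)) = 2*S.ν*(∫ τ in (0:ℝ)..t, S.B τ) := by ring
    rw [e]
    linarith
  have final3 : S.ν*S.k^2*t^3*S.A t ≤ 27*S.A 0 := by
    have e : S.ν*((t/3)*(S.k^2*(t/3)^2*S.A t)) = S.ν*S.k^2*t^3*S.A t/27 := by ring
    rw [e] at c5
    linarith
  have expand : (1 + S.ν*t + S.ν*S.k^2*t^3) * S.A t
      = S.A t + S.ν*t*S.A t + S.ν*S.k^2*t^3*S.A t := by ring
  rw [expand]
  linarith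

end ED

end EDP

open Set

/-- The `L²` norm of a function on the interval `(-1, 1)`. -/
noncomputable def L2norm (h : ℝ → ℂ) : ℝ :=
  Real.sqrt (∫ y in (-1 : ℝ)..1, ‖h y‖ ^ 2)

/-- Enhanced dissipation for the drift–diffusion equation at `x`-frequency `k ≠ 0`:
`‖f(t)‖_{L²} ≤ C (1 + νt + νk²t³)^{-1/2} ‖f(0)‖_{L²}`. -/
theorem enhanced_dissipation_f :
    ∃ C > (0 : ℝ), ∀ (ν k : ℝ) (f ft fy fyy fty : ℝ → ℝ → ℂ),
      0 < ν → k ≠ 0 →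
      ContinuousOn (fun p : ℝ × ℝ => f p.1 p.2) (Ici 0 ×ˢ Icc (-1) 1) →
      ContinuousOn (fun p : ℝ × ℝ => ft p.1 p.2) (Ici 0 ×ˢ Icc (-1) 1) →
      ContinuousOn (fun p : ℝ × ℝ => fy p.1 p.2) (Ici 0 ×ˢ Icc (-1) 1) →
      ContinuousOn (fun p : ℝ × ℝ => fyy p.1 p.2) (Ici 0 ×ˢ Icc (-1) 1) →
      ContinuousOn (fun p : ℝ × ℝ => fty p.1 p.2) (Ici 0 ×ˢ Icc (-1) 1) →
      (∀ t ∈ Ici (0 : ℝ), ∀ y ∈ Icc (-1 : ℝ) 1,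
        HasDerivAt (fun s => f s y) (ft t y) t) →
      (∀ t ∈ Ici (0 : ℝ), ∀ y ∈ Icc (-1 : ℝ) 1,
        HasDerivAt (fun z => f t z) (fy t y) y) →
      (∀ t ∈ Ici (0 : ℝ), ∀ y ∈ Icc (-1 : ℝ) 1,
        HasDerivAt (fun z => fy t z) (fyy t y) y) →
      (∀ t ∈ Ici (0 : ℝ), ∀ y ∈ Icc (-1 : ℝ) 1,
        HasDerivAt (fun s => fy s y) (fty t y) t) →
      (∀ t ∈ Ici (0 : ℝ), ∀ y ∈ Ioo (-1 : ℝ) 1,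
        ft t y = (ν : ℂ) * (fyy t y - (k : ℂ) ^ 2 * f t y)
          - Complex.I * (k : ℂ) * (y : ℂ) * f t y) →
      (∀ t ∈ Ici (0 : ℝ), f t (-1) = 0 ∧ f t 1 = 0) →
      ∀ t : ℝ, 0 ≤ t →
        L2norm (f t)
          ≤ C * (1 + ν * t + ν * k ^ 2 * t ^ 3) ^ (-(1 : ℝ) / 2) * L2norm (f 0) := by
  refine ⟨6, by norm_num, ?_⟩
  intro ν k f ft fy fyy fty hν hk cf cft cfy cfyy cfty dft dfy dfyy dfty pde bc t htt
  set S : EDP.ED := ⟨ν, k, f, ft, fy, fyy, fty, hν, hk, cf, cft, cfy, cfyy, cfty,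
    dft, dfy, dfyy, dfty, pde, bc⟩ with hS
  have hmb := S.main_bound htt
  have hA0 : 0 ≤ S.A 0 := S.A_nonneg
  have hAt : 0 ≤ S.A t := S.A_nonneg
  have hP1 : (1:ℝ) ≤ 1 + ν * t + ν * k^2 * t^3 := by
    nlinarith [mul_nonneg hν.le htt,
      mul_nonneg (mul_nonneg hν.le (sq_nonneg k)) (pow_nonneg htt 3)]
  have hPpos : (0:ℝ) < 1 + ν * t + ν * k^2 * t^3 := by linarith
  have hmb' : (1 + ν * t + ν * k^2 * t^3) * S.A t ≤ 36 * S.A 0 := by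
    have : (1 + S.ν*t + S.ν*S.k^2*t^3) = (1 + ν * t + ν * k^2 * t^3) := rfl
    rw [this] at hmb
    linarith
  have hsq : Real.sqrt ((1 + ν * t + ν * k^2 * t^3) * S.A t)
      ≤ Real.sqrt (36 * S.A 0) := Real.sqrt_le_sqrt hmb'
  rw [Real.sqrt_mul hPpos.le, Real.sqrt_mul (by norm_num : (0:ℝ) ≤ 36)] at hsq
  have h6 : Real.sqrt 36 = 6 := by
    rw [show (36:ℝ) = 6^2 by norm_num, Real.sqrt_sq (by norm_num)]
  rw [h6] at hsq
  have hrpow : (1 + ν * t + ν * k^2 * t^3) ^ (-(1:ℝ)/2)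
      = (Real.sqrt (1 + ν * t + ν * k^2 * t^3))⁻¹ := by
    rw [show (-(1:ℝ)/2) = -(1/2 : ℝ) by norm_num, Real.rpow_neg hPpos.le,
      Real.sqrt_eq_rpow]
  have hLt : L2norm (f t) = Real.sqrt (S.A t) := rfl
  have hL0 : L2norm (f 0) = Real.sqrt (S.A 0) := rfl
  rw [hLt, hL0, hrpow]
  have hsP : 0 < Real.sqrt (1 + ν * t + ν * k^2 * t^3) := Real.sqrt_pos.mpr hPpos
  rw [show (6:ℝ) * (Real.sqrt (1 + ν * t + ν * k^2 * t^3))⁻¹ * Real.sqrt (S.A 0)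
      = (6 * Real.sqrt (S.A 0)) / Real.sqrt (1 + ν * t + ν * k^2 * t^3) by ring,
    le_div_iff₀ hsP]
  calc Real.sqrt (S.A t) * Real.sqrt (1 + ν * t + ν * k^2 * t^3)
      = Real.sqrt (1 + ν * t + ν * k^2 * t^3) * Real.sqrt (S.A t) := by ring
    _ ≤ 6 * Real.sqrt (S.A 0) := hsq
end
end

section
/- There is a universal constant C > 0 such that: for every k ∈ ℝ with |k| ≥ 1, every t ≥ 0, and all functions ψ, w : [−1,1] → ℂ with ψ twice continuously differentiable, w continuously differentiable, ψ(±1) = 0, w(±1) = 0, and ψ''(y) − k² ψ(y) = −w(y) on (−1,1), one has |k|² ( ‖ψ'‖²_{L²} + k² ‖ψ‖²_{L²} )^{1/2} ≤ C (1+t)^{−1} ( ‖(e_{k,t} w)'‖²_{L²} + k² ‖w‖²_{L²} )^{1/2}, where e_{k,t}(y) = e^{i k y t} and (e_{k,t} w)'(y) = e^{ikyt}( w'(y) + i k t w(y) ). -/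
open Set

/-- The squared `L²` norm of a function on the interval `(-1, 1)`. -/
noncomputable def L2sq (h : ℝ → ℂ) : ℝ :=
  ∫ y in (-1 : ℝ)..1, ‖h y‖ ^ 2

/-- The function `y ↦ e^{ikyt} w(y)`. -/
noncomputable def ew (k t : ℝ) (w : ℝ → ℂ) : ℝ → ℂ :=
  fun y => Complex.exp (Complex.I * (k : ℂ) * (y : ℂ) * (t : ℂ)) * w y

open MeasureTheory

lemma l2sq_nonneg (h : ℝ → ℂ) : 0 ≤ L2sq h :=
  intervalIntegral.integral_nonneg (by norm_num) (fun y _ => by positivity)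

lemma memL2 {f : ℝ → ℂ} (hf : Continuous f) :
    MemLp f (ENNReal.ofReal 2) (volume.restrict (Ioc (-1:ℝ) 1)) := by
  haveI : IsFiniteMeasure (volume.restrict (Ioc (-1:ℝ) 1)) := by
    constructor
    rw [Measure.restrict_apply_univ, Real.volume_Ioc]
    exact ENNReal.ofReal_lt_top
  obtain ⟨M, hM⟩ := (isCompact_Icc (a := (-1:ℝ)) (b := 1)).exists_bound_of_continuousOn
    hf.continuousOn
  refine MemLp.of_bound hf.aestronglyMeasurable M ?_
  filter_upwards [ae_restrict_mem measurableSet_Ioc] with y hy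
  exact hM y (Ioc_subset_Icc_self hy)

lemma cs {f g : ℝ → ℂ} (hf : Continuous f) (hg : Continuous g) :
    ‖∫ y in (-1:ℝ)..1, f y * star (g y)‖ ≤ Real.sqrt (L2sq f) * Real.sqrt (L2sq g) := by
  have h1 : ‖∫ y in (-1:ℝ)..1, f y * star (g y)‖
      ≤ ∫ y in (-1:ℝ)..1, ‖f y‖ * ‖g y‖ := by
    refine (intervalIntegral.norm_integral_le_integral_norm (by norm_num)).trans_eq ?_
    congr 1; funext y; rw [norm_mul, norm_star]
  have hpq : Real.HolderConjugate 2 2 := Real.holderConjugate_iff.mpr ⟨one_lt_two, by norm_num⟩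
  have h2 := integral_mul_norm_le_Lp_mul_Lq (μ := volume.restrict (Ioc (-1:ℝ) 1))
    hpq (memL2 hf) (memL2 hg)
  refine h1.trans ?_
  rw [intervalIntegral.integral_of_le (by norm_num : (-1:ℝ) ≤ 1)]
  refine h2.trans_eq ?_
  have key : ∀ h : ℝ → ℂ, (∫ y in Ioc (-1:ℝ) 1, ‖h y‖ ^ (2:ℝ)) ^ ((1:ℝ)/2)
      = Real.sqrt (L2sq h) := by
    intro h
    rw [Real.sqrt_eq_rpow, L2sq, intervalIntegral.integral_of_le (by norm_num : (-1:ℝ) ≤ 1)]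
    norm_num [Real.rpow_natCast]
  rw [key f, key g]

lemma mul_star_self (z : ℂ) : z * star z = ((‖z‖^2 : ℝ) : ℂ) := by
  rw [Complex.star_def, Complex.mul_conj, Complex.normSq_eq_norm_sq]


/-- High-frequency stream function estimate:
`|k|² ‖(∂_y,k)ψ‖ ≤ C (1+t)^{-1} ‖(∂_y,k)(e^{ikyt}w)‖` for `|k| ≥ 1`. -/
theorem psi_highfreq_first :
    ∃ C > (0 : ℝ), ∀ (k t : ℝ) (ψ w : ℝ → ℂ),
      1 ≤ |k| → 0 ≤ t →
      ContDiff ℝ 2 ψ → ContDiff ℝ 1 w →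
      ψ (-1) = 0 → ψ 1 = 0 → w (-1) = 0 → w 1 = 0 →
      (∀ y ∈ Ioo (-1 : ℝ) 1, deriv (deriv ψ) y - (k : ℂ) ^ 2 * ψ y = -w y) →
      |k| ^ 2 * Real.sqrt (L2sq (deriv ψ) + k ^ 2 * L2sq ψ)
        ≤ C * (1 + t)⁻¹ * Real.sqrt (L2sq (deriv (ew k t w)) + k ^ 2 * L2sq w) := by
  refine ⟨3, by norm_num, fun k t ψ w hk ht hψ hw hψa hψb hwa hwb hODE => ?_⟩
  -- basic differentiability / continuity
  have hψd : Differentiable ℝ ψ := hψ.differentiable (by norm_num)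
  have hψ1 : ContDiff ℝ 1 (deriv ψ) := by
    have h2 : ContDiff ℝ ((1:ℕ) + 1) ψ := by exact_mod_cast hψ
    exact (contDiff_succ_iff_deriv.mp h2).2.2
  have hψ'd : Differentiable ℝ (deriv ψ) := hψ1.differentiable (by norm_num)
  have cψ : Continuous ψ := hψ.continuous
  have cψ' : Continuous (deriv ψ) := hψ1.continuous
  have cψ'' : Continuous (deriv (deriv ψ)) := hψ1.continuous_deriv (by norm_num)
  have hwd : Differentiable ℝ w := hw.differentiable (by norm_num)
  have cw : Continuous w := hw.continuous
  have cw' : Continuous (deriv w) := hw.continuous_deriv (by norm_num)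
  -- the exponential
  set e : ℝ → ℂ := fun y => Complex.exp (Complex.I * (k : ℂ) * (y : ℂ) * (t : ℂ)) with he_def
  have hED : ∀ y : ℝ, HasDerivAt e (e y * (Complex.I * k * t)) y := by
    intro y
    have hbase : HasDerivAt (fun y : ℝ => (y : ℂ)) 1 y := by
      simpa using (hasDerivAt_id y).ofReal_comp
    have hin : HasDerivAt (fun y : ℝ => Complex.I * (k:ℂ) * (y:ℂ) * (t:ℂ))
        (Complex.I * k * t) y := by
      have := (hbase.const_mul (Complex.I * (k:ℂ))).mul_const (t:ℂ)
      simpa [mul_assoc, mul_comm, mul_left_comm] using this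
    exact hin.cexp
  have ce : Continuous e := by
    apply Complex.continuous_exp.comp
    exact ((continuous_const.mul Complex.continuous_ofReal).mul continuous_const)
  have hnorme : ∀ y : ℝ, ‖e y‖ = 1 := by
    intro y
    rw [he_def]
    simp only [Complex.norm_exp]
    norm_num [Complex.mul_re, Complex.mul_im]
  have hstar_e : ∀ y : ℝ, e y * star (e y) = 1 := by
    intro y
    rw [Complex.star_def, ← Complex.exp_conj, ← Complex.exp_add]
    have : Complex.I * (k:ℂ) * (y:ℂ) * (t:ℂ) +
        (starRingEnd ℂ) (Complex.I * (k:ℂ) * (y:ℂ) * (t:ℂ)) = 0 := by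
      simp [map_mul, Complex.conj_I, Complex.conj_ofReal]
    rw [this, Complex.exp_zero]
  -- derivative of ew
  have hewD : ∀ y : ℝ, HasDerivAt (ew k t w)
      (e y * (Complex.I * k * t) * w y + e y * deriv w y) y := by
    intro y
    exact (hED y).mul (hwd y).hasDerivAt
  have hewderiv : ∀ y : ℝ, deriv (ew k t w) y
      = e y * (Complex.I * k * t) * w y + e y * deriv w y :=
    fun y => (hewD y).deriv
  have cew' : Continuous (deriv (ew k t w)) := by
    have : deriv (ew k t w) = fun y => e y * (Complex.I * k * t) * w y + e y * deriv w y :=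
      funext hewderiv
    rw [this]
    exact ((ce.mul continuous_const).mul cw).add (ce.mul cw')
  have cewψ : Continuous (ew k t ψ) := ce.mul cψ
  -- energy and data
  set E : ℝ := L2sq (deriv ψ) + k ^ 2 * L2sq ψ with hE_def
  set F : ℝ := L2sq (deriv (ew k t w)) + k ^ 2 * L2sq w with hF_def
  set J : ℂ := ∫ y in (-1:ℝ)..1, w y * star (ψ y) with hJ_def
  -- integration by parts 1
  have ibp1 : (∫ y in (-1:ℝ)..1,
      (deriv (deriv ψ) y * star (ψ y) + deriv ψ y * star (deriv ψ y))) = 0 := by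
    have := intervalIntegral.integral_deriv_mul_eq_sub (a := (-1:ℝ)) (b := 1)
      (u := deriv ψ) (v := fun y => star (ψ y))
      (u' := deriv (deriv ψ)) (v' := fun y => star (deriv ψ y))
      (fun x _ => (hψ'd x).hasDerivAt)
      (fun x _ => ((hψd x).hasDerivAt).star)
      (cψ''.intervalIntegrable _ _) ((cψ'.star).intervalIntegrable _ _)
    rw [this]
    simp [hψa, hψb]
  -- integration by parts 2
  have ibp2 : (∫ y in (-1:ℝ)..1,
      (deriv w y * star (ψ y) + w y * star (deriv ψ y))) = 0 := by
    have := intervalIntegral.integral_deriv_mul_eq_sub (a := (-1:ℝ)) (b := 1)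
      (u := w) (v := fun y => star (ψ y))
      (u' := deriv w) (v' := fun y => star (deriv ψ y))
      (fun x _ => (hwd x).hasDerivAt)
      (fun x _ => ((hψd x).hasDerivAt).star)
      (cw'.intervalIntegrable _ _) ((cψ'.star).intervalIntegrable _ _)
    rw [this]
    simp [hwa, hwb]
  -- compute ∫ ψ' star ψ' and ∫ ψ star ψ
  have l2c : ∀ (h : ℝ → ℂ), (∫ y in (-1:ℝ)..1, h y * star (h y)) = ((L2sq h : ℝ) : ℂ) := by
    intro h
    rw [show (fun y => h y * star (h y)) = fun y => ((‖h y‖^2 : ℝ) : ℂ) from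
      funext fun y => mul_star_self (h y)]
    rw [intervalIntegral.integral_ofReal, L2sq]
  -- identity 1 : J = E
  have hsub : (∫ y in (-1:ℝ)..1, deriv (deriv ψ) y * star (ψ y))
      = ∫ y in (-1:ℝ)..1, ((k:ℂ)^2 * ψ y - w y) * star (ψ y) := by
    apply intervalIntegral.integral_congr_ae
    filter_upwards [compl_mem_ae_iff.mpr (Real.volume_singleton (a := (1:ℝ)))] with y hy hmem
    rw [Set.uIoc_of_le (by norm_num : (-1:ℝ) ≤ 1)] at hmem
    have hyo : y ∈ Ioo (-1:ℝ) 1 := ⟨hmem.1, lt_of_le_of_ne hmem.2 hy⟩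
    have hode := hODE y hyo
    have : deriv (deriv ψ) y = (k:ℂ)^2 * ψ y - w y := by linear_combination hode
    rw [this]
  have hsplit : (∫ y in (-1:ℝ)..1, ((k:ℂ)^2 * ψ y - w y) * star (ψ y))
      = (k:ℂ)^2 * ((L2sq ψ : ℝ) : ℂ) - J := by
    have h1 : (fun y => ((k:ℂ)^2 * ψ y - w y) * star (ψ y))
        = fun y => (k:ℂ)^2 * (ψ y * star (ψ y)) - w y * star (ψ y) := by
      funext y; ring
    rw [h1, intervalIntegral.integral_sub, intervalIntegral.integral_const_mul, l2c ψ, hJ_def]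
    · exact (continuous_const.mul (cψ.mul cψ.star)).intervalIntegrable _ _
    · exact (cw.mul cψ.star).intervalIntegrable _ _
  have hibp1' : (∫ y in (-1:ℝ)..1, deriv (deriv ψ) y * star (ψ y))
      = -((L2sq (deriv ψ) : ℝ) : ℂ) := by
    have hadd : (∫ y in (-1:ℝ)..1,
        (deriv (deriv ψ) y * star (ψ y) + deriv ψ y * star (deriv ψ y)))
        = (∫ y in (-1:ℝ)..1, deriv (deriv ψ) y * star (ψ y))
          + ∫ y in (-1:ℝ)..1, deriv ψ y * star (deriv ψ y) :=
      intervalIntegral.integral_add ((cψ''.mul cψ.star).intervalIntegrable _ _)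
        ((cψ'.mul cψ'.star).intervalIntegrable _ _)
    have h0 := ibp1
    rw [hadd, l2c (deriv ψ)] at h0
    linear_combination h0
  -- J = E
  have hJE : J = ((E : ℝ) : ℂ) := by
    have h0 := hsub.trans hsplit
    rw [hibp1'] at h0
    rw [hE_def]
    push_cast
    linear_combination h0
  have hEnn : 0 ≤ E := add_nonneg (l2sq_nonneg _) (mul_nonneg (sq_nonneg k) (l2sq_nonneg _))
  have hFnn : 0 ≤ F := add_nonneg (l2sq_nonneg _) (mul_nonneg (sq_nonneg k) (l2sq_nonneg _))
  have hJnorm : ‖J‖ = E := by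
    rw [hJE, Complex.norm_real, Real.norm_eq_abs, abs_of_nonneg hEnn]
  -- pointwise identity for the weighted integrand
  have hptw : ∀ y : ℝ, deriv (ew k t w) y * star (ew k t ψ y)
      = deriv w y * star (ψ y) + (Complex.I * k * t) * (w y * star (ψ y)) := by
    intro y
    have h1 : star (ew k t ψ y) = star (e y) * star (ψ y) := by
      rw [show ew k t ψ y = e y * ψ y from rfl, star_mul']
    rw [hewderiv y, h1]
    calc (e y * (Complex.I * k * t) * w y + e y * deriv w y) * (star (e y) * star (ψ y))
        = (e y * star (e y))
          * ((Complex.I * k * t) * w y * star (ψ y) + deriv w y * star (ψ y)) := by ring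
      _ = _ := by rw [hstar_e y]; ring
  -- identity 2
  have hid2 : (Complex.I * k * t) * J
      = (∫ y in (-1:ℝ)..1, deriv (ew k t w) y * star (ew k t ψ y))
        + ∫ y in (-1:ℝ)..1, w y * star (deriv ψ y) := by
    have h1 : (∫ y in (-1:ℝ)..1, deriv (ew k t w) y * star (ew k t ψ y))
        = ∫ y in (-1:ℝ)..1,
            (deriv w y * star (ψ y) + (Complex.I * k * t) * (w y * star (ψ y))) :=
      intervalIntegral.integral_congr (fun y _ => hptw y)
    have h2 : (∫ y in (-1:ℝ)..1,
          (deriv w y * star (ψ y) + (Complex.I * k * t) * (w y * star (ψ y))))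
        = (∫ y in (-1:ℝ)..1, deriv w y * star (ψ y)) + (Complex.I * k * t) * J := by
      rw [intervalIntegral.integral_add (f := fun y => deriv w y * star (ψ y))
        (g := fun y => (Complex.I * k * t) * (w y * star (ψ y))) ((cw'.mul cψ.star).intervalIntegrable _ _)
        ((continuous_const.mul (cw.mul cψ.star)).intervalIntegrable _ _),
        intervalIntegral.integral_const_mul, hJ_def]
    have h3 : (∫ y in (-1:ℝ)..1, deriv w y * star (ψ y))
        = -∫ y in (-1:ℝ)..1, w y * star (deriv ψ y) := by
      have hadd : (∫ y in (-1:ℝ)..1, (deriv w y * star (ψ y) + w y * star (deriv ψ y)))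
          = (∫ y in (-1:ℝ)..1, deriv w y * star (ψ y))
            + ∫ y in (-1:ℝ)..1, w y * star (deriv ψ y) :=
        intervalIntegral.integral_add ((cw'.mul cψ.star).intervalIntegrable _ _)
          ((cw.mul cψ'.star).intervalIntegrable _ _)
      have h0 := ibp2
      rw [hadd] at h0
      linear_combination h0
    rw [h1, h2, h3]
    ring
  -- L2sq is invariant under multiplication by the unimodular exponential
  have hl2e : L2sq (ew k t ψ) = L2sq ψ := by
    unfold L2sq
    refine intervalIntegral.integral_congr fun y _ => ?_
    rw [show ew k t ψ y = e y * ψ y from rfl, norm_mul, hnorme, one_mul]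
  -- the two main estimates
  have est1 : E ≤ Real.sqrt (L2sq w) * Real.sqrt (L2sq ψ) := by
    rw [← hJnorm, hJ_def]
    exact cs cw cψ
  have est2 : |k| * t * E
      ≤ Real.sqrt (L2sq (deriv (ew k t w))) * Real.sqrt (L2sq ψ)
        + Real.sqrt (L2sq w) * Real.sqrt (L2sq (deriv ψ)) := by
    have hn : ‖(Complex.I * k * t) * J‖ = |k| * t * E := by
      rw [norm_mul, norm_mul, norm_mul, Complex.norm_I, one_mul, Complex.norm_real,
        Complex.norm_real, Real.norm_eq_abs, Real.norm_eq_abs, abs_of_nonneg ht, hJnorm]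
    calc |k| * t * E = ‖(Complex.I * k * t) * J‖ := hn.symm
      _ ≤ ‖∫ y in (-1:ℝ)..1, deriv (ew k t w) y * star (ew k t ψ y)‖
          + ‖∫ y in (-1:ℝ)..1, w y * star (deriv ψ y)‖ := by
          rw [hid2]; exact norm_add_le _ _
      _ ≤ Real.sqrt (L2sq (deriv (ew k t w))) * Real.sqrt (L2sq (ew k t ψ))
          + Real.sqrt (L2sq w) * Real.sqrt (L2sq (deriv ψ)) :=
          add_le_add (cs cew' cewψ) (cs cw cψ')
      _ = _ := by rw [hl2e]
  -- square-root bounds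
  set a : ℝ := Real.sqrt E with ha_def
  set b : ℝ := Real.sqrt F with hb_def
  have hann : 0 ≤ a := Real.sqrt_nonneg _
  have hbnn : 0 ≤ b := Real.sqrt_nonneg _
  have ha2 : a ^ 2 = E := Real.sq_sqrt hEnn
  have hb2 : b ^ 2 = F := Real.sq_sqrt hFnn
  have hk0 : (0:ℝ) < |k| := lt_of_lt_of_le one_pos hk
  have hsqrtmul : ∀ y : ℝ, Real.sqrt (k ^ 2 * y) = |k| * Real.sqrt y := fun y => by
    rw [Real.sqrt_mul (sq_nonneg k), Real.sqrt_sq_eq_abs]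
  have b1 : |k| * Real.sqrt (L2sq ψ) ≤ a := by
    rw [← hsqrtmul]
    exact Real.sqrt_le_sqrt (by rw [hE_def]; linarith [l2sq_nonneg (deriv ψ)])
  have b2 : Real.sqrt (L2sq (deriv ψ)) ≤ a :=
    Real.sqrt_le_sqrt (by rw [hE_def]; nlinarith [l2sq_nonneg ψ, sq_nonneg k])
  have b3 : |k| * Real.sqrt (L2sq w) ≤ b := by
    rw [← hsqrtmul]
    exact Real.sqrt_le_sqrt (by rw [hF_def]; linarith [l2sq_nonneg (deriv (ew k t w))])
  have b4 : Real.sqrt (L2sq (deriv (ew k t w))) ≤ b :=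
    Real.sqrt_le_sqrt (by rw [hF_def]; nlinarith [l2sq_nonneg w, sq_nonneg k])
  -- main algebraic conclusions
  have key1 : k ^ 2 * a ≤ b := by
    rcases eq_or_lt_of_le hann with h0 | h0
    · rw [← h0]; simpa using hbnn
    · have m1 : (|k| * Real.sqrt (L2sq w)) * (|k| * Real.sqrt (L2sq ψ)) ≤ b * a :=
        mul_le_mul b3 b1 (by positivity) hbnn
      have e1' : k ^ 2 * E ≤ k ^ 2 * (Real.sqrt (L2sq w) * Real.sqrt (L2sq ψ)) :=
        mul_le_mul_of_nonneg_left est1 (sq_nonneg k)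
      have meq : (k ^ 2 * a) * a = k ^ 2 * E := by rw [← ha2]; ring
      have meq2 : (|k| * Real.sqrt (L2sq w)) * (|k| * Real.sqrt (L2sq ψ))
          = k ^ 2 * (Real.sqrt (L2sq w) * Real.sqrt (L2sq ψ)) := by
        rw [← sq_abs k]; ring
      have hchain : (k ^ 2 * a) * a ≤ b * a := by linarith [m1, e1', meq, meq2]
      exact le_of_mul_le_mul_right hchain h0
  have key2 : t * (k ^ 2 * a) ≤ 2 * b := by
    rcases eq_or_lt_of_le hann with h0 | h0
    · rw [← h0]; simpa using hbnn
    · have m1 : Real.sqrt (L2sq (deriv (ew k t w))) * (|k| * Real.sqrt (L2sq ψ)) ≤ b * a :=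
        mul_le_mul b4 b1 (by positivity) hbnn
      have m2 : (|k| * Real.sqrt (L2sq w)) * Real.sqrt (L2sq (deriv ψ)) ≤ b * a :=
        mul_le_mul b3 b2 (Real.sqrt_nonneg _) hbnn
      have m3 : |k| * (|k| * t * E)
          ≤ |k| * (Real.sqrt (L2sq (deriv (ew k t w))) * Real.sqrt (L2sq ψ)
            + Real.sqrt (L2sq w) * Real.sqrt (L2sq (deriv ψ))) :=
        mul_le_mul_of_nonneg_left est2 (le_of_lt hk0)
      have meq : |k| * (|k| * t * E) = (t * (k ^ 2 * a)) * a := by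
        rw [← ha2, ← sq_abs k]; ring
      have meq1 : |k| * (Real.sqrt (L2sq (deriv (ew k t w))) * Real.sqrt (L2sq ψ)
            + Real.sqrt (L2sq w) * Real.sqrt (L2sq (deriv ψ)))
          = Real.sqrt (L2sq (deriv (ew k t w))) * (|k| * Real.sqrt (L2sq ψ))
            + (|k| * Real.sqrt (L2sq w)) * Real.sqrt (L2sq (deriv ψ)) := by ring
      have hchain : (t * (k ^ 2 * a)) * a ≤ (2 * b) * a := by
        linarith [m1, m2, m3, meq, meq1]
      exact le_of_mul_le_mul_right hchain h0
  have h1t : (0:ℝ) < 1 + t := by linarith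
  have hsum : (1 + t) * (k ^ 2 * a) ≤ 3 * b := by
    have : (1 + t) * (k ^ 2 * a) = k ^ 2 * a + t * (k ^ 2 * a) := by ring
    linarith [key1, key2]
  rw [sq_abs]
  calc k ^ 2 * a = (1 + t)⁻¹ * ((1 + t) * (k ^ 2 * a)) := by field_simp
    _ ≤ (1 + t)⁻¹ * (3 * b) := mul_le_mul_of_nonneg_left hsum (by positivity)
    _ = 3 * (1 + t)⁻¹ * b := by ring
end
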